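/- arXiv:1701.00982 — 5 statements merged into one kernel-verified Lean document; each statement's English description precedes it below -/
import Mathlib

section
/- Fix s ∈ ℝ. Then the upper incomplete gamma function satisfies Γ(s, x) / (x^{s−1} e^{−x}) → 1 as x → ∞, where Γ(s, x) = ∫_x^∞ t^{s−1} e^{−t} dt. -/
open MeasureTheory Real Filter

lemma phi_contAt (s : ℝ) {x : ℝ} (hx : 0 < x) :
    ContinuousAt (fun t : ℝ => t ^ (s - 1) * exp (-t)) x :=
  (Real.continuousAt_rpow_const x _ (Or.inl hx.ne')).mul
    ((Real.continuous_exp.comp continuous_neg).continuousAt)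

lemma phi_integrableOn (s : ℝ) :
    IntegrableOn (fun t : ℝ => t ^ (s - 1) * exp (-t)) (Set.Ioi 1) := by
  have hmaj : IntegrableOn (fun t : ℝ => t ^ |s - 1| * exp (-t)) (Set.Ioi 1) := by
    have := integrableOn_rpow_mul_exp_neg_mul_rpow
      (lt_of_lt_of_le neg_one_lt_zero (abs_nonneg (s - 1))) one_pos one_pos
    simpa using this.mono_set (Set.Ioi_subset_Ioi zero_le_one)
  refine hmaj.mono' ?_ ?_
  · exact (ContinuousOn.aestronglyMeasurable
      (fun x hx => (phi_contAt s (lt_trans one_pos hx)).continuousWithinAt)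
      measurableSet_Ioi)
  · filter_upwards [ae_restrict_mem measurableSet_Ioi] with t ht
    have ht1 : (1 : ℝ) ≤ t := le_of_lt ht
    have h1 : t ^ (s - 1) ≤ t ^ |s - 1| :=
      Real.rpow_le_rpow_of_exponent_le ht1 (le_abs_self _)
    have h2 : 0 ≤ t ^ (s - 1) := Real.rpow_nonneg (by linarith) _
    rw [norm_mul, Real.norm_of_nonneg h2, Real.norm_of_nonneg (exp_pos _).le]
    exact mul_le_mul_of_nonneg_right h1 (exp_pos _).le

lemma tendsto_div_sub_const (c : ℝ) :
    Tendsto (fun x : ℝ => x / (x - c)) atTop (nhds 1) := by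
  have h : Tendsto (fun x : ℝ => (1 - c * x⁻¹)⁻¹) atTop (nhds 1) := by
    have h1 : Tendsto (fun x : ℝ => 1 - c * x⁻¹) atTop (nhds 1) := by
      have := (tendsto_inv_atTop_zero (𝕜 := ℝ)).const_mul c
      simpa using tendsto_const_nhds.sub this
    simpa using h1.inv₀ one_ne_zero
  refine h.congr' ?_
  filter_upwards [eventually_gt_atTop (max 0 c)] with x hx
  have hx0 : 0 < x := lt_of_le_of_lt (le_max_left _ _) hx
  have hxc : c < x := lt_of_le_of_lt (le_max_right _ _) hx
  rw [show (1 : ℝ) - c * x⁻¹ = (x - c) / x by field_simp, inv_div]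

/-- For fixed real `s`, the upper incomplete gamma function satisfies
`Γ(s, x) / (x^{s-1} e^{-x}) → 1` as `x → ∞`. -/
theorem upper_incomplete_gamma_asymptotic (s : ℝ) :
    Tendsto (fun x : ℝ =>
        (∫ t in Set.Ioi x, t ^ (s - 1) * exp (-t)) / (x ^ (s - 1) * exp (-x)))
      atTop (nhds 1) := by
  set φ : ℝ → ℝ := fun t => t ^ (s - 1) * exp (-t) with hφ
  set f : ℝ → ℝ := fun x => ∫ t in Set.Ioi x, φ t with hf
  set g : ℝ → ℝ := fun x => x ^ (s - 1) * exp (-x) with hg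
  set C : ℝ := ∫ t in Set.Ioi 1, φ t with hC
  have hint := phi_integrableOn s
  -- decomposition of f for x ≥ 1
  have hkey : ∀ x : ℝ, 1 ≤ x → f x = C - ∫ t in (1:ℝ)..x, φ t := by
    intro x hx
    have hsplit : Set.Ioi (1:ℝ) = Set.Ioc 1 x ∪ Set.Ioi x := (Set.Ioc_union_Ioi_eq_Ioi hx).symm
    have hdisj : Disjoint (Set.Ioc 1 x) (Set.Ioi x) := Set.Ioc_disjoint_Ioi le_rfl
    have h1 : IntegrableOn φ (Set.Ioc 1 x) := hint.mono_set Set.Ioc_subset_Ioi_self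
    have h2 : IntegrableOn φ (Set.Ioi x) :=
      hint.mono_set (Set.Ioi_subset_Ioi hx)
    have := setIntegral_union hdisj measurableSet_Ioi h1 h2
    rw [← hsplit] at this
    rw [intervalIntegral.integral_of_le hx]
    rw [hC, this]
    ring
  -- derivative of f
  have hf' : ∀ᶠ x in atTop, HasDerivAt f (-(φ x)) x := by
    filter_upwards [eventually_gt_atTop 1] with x hx
    have hD : HasDerivAt (fun y => C - ∫ t in (1:ℝ)..y, φ t) (-(φ x)) x := by
      have hii : IntervalIntegrable φ volume 1 x := by
        rw [intervalIntegrable_iff_integrableOn_Ioc_of_le hx.le]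
        exact hint.mono_set Set.Ioc_subset_Ioi_self
      have hsm : StronglyMeasurableAtFilter φ (nhds x) volume :=
        ContinuousAt.stronglyMeasurableAtFilter isOpen_Ioi
          (fun y hy => phi_contAt s (lt_trans one_pos hy)) x hx
      have := (intervalIntegral.integral_hasDerivAt_right hii hsm
        (phi_contAt s (lt_trans one_pos hx)))
      have h3 : HasDerivAt (fun y => C - ∫ t in (1:ℝ)..y, φ t) (0 - φ x) x :=
        (hasDerivAt_const x C).sub this
      simpa using h3
    refine hD.congr_of_eventuallyEq ?_
    filter_upwards [eventually_gt_nhds hx] with y hy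
    exact hkey y hy.le
  -- derivative of g
  set G : ℝ → ℝ := fun x => ((s - 1) * x ^ (s - 2) - x ^ (s - 1)) * exp (-x) with hG
  have hg' : ∀ᶠ x in atTop, HasDerivAt g (G x) x := by
    filter_upwards [eventually_gt_atTop 0] with x hx
    have h1 : HasDerivAt (fun y : ℝ => y ^ (s - 1)) ((s - 1) * x ^ (s - 1 - 1)) x :=
      Real.hasDerivAt_rpow_const (Or.inl hx.ne')
    have h2 : HasDerivAt (fun y : ℝ => exp (-y)) (exp (-x) * (-1)) x :=
      (hasDerivAt_neg x).exp
    have := h1.mul h2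
    refine this.congr_deriv ?_
    rw [hG]
    ring_nf
  -- G is eventually nonzero, and f'/G → 1
  have hGfac : ∀ x : ℝ, 0 < x → G x = x ^ (s - 2) * ((s - 1) - x) * exp (-x) := by
    intro x hx
    have : x ^ (s - 1) = x ^ (s - 2) * x := by
      rw [← Real.rpow_add_one hx.ne' (s - 2)]
      ring_nf
    show ((s - 1) * x ^ (s - 2) - x ^ (s - 1)) * exp (-x) = _
    rw [this]
    ring
  have hGne : ∀ᶠ x in atTop, G x ≠ 0 := by
    filter_upwards [eventually_gt_atTop (max 0 (s - 1))] with x hx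
    have hx0 : 0 < x := lt_of_le_of_lt (le_max_left _ _) hx
    have hxs : s - 1 < x := lt_of_le_of_lt (le_max_right _ _) hx
    rw [hGfac x hx0]
    exact mul_ne_zero (mul_ne_zero (Real.rpow_pos_of_pos hx0 _).ne' (by linarith))
      (exp_pos _).ne'
  -- f → 0
  have hf0 : Tendsto f atTop (nhds 0) := by
    have h1 : Tendsto (fun x : ℝ => C - ∫ t in (1:ℝ)..x, φ t) atTop (nhds 0) := by
      have := MeasureTheory.intervalIntegral_tendsto_integral_Ioi 1 hint tendsto_id
      have h2 : Tendsto (fun x : ℝ => C - ∫ t in (1:ℝ)..x, φ t) atTop (nhds (C - C)) :=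
        tendsto_const_nhds (x := C) (f := atTop (α := ℝ)) |>.sub this
      simpa using h2
    refine (h1.congr' ?_)
    filter_upwards [eventually_ge_atTop 1] with x hx
    exact (hkey x hx).symm
  -- g → 0
  have hg0 : Tendsto g atTop (nhds 0) := by
    have := tendsto_rpow_mul_exp_neg_mul_atTop_nhds_zero (s - 1) 1 one_pos
    simpa [hg] using this
  -- ratio of derivatives
  have hdiv : Tendsto (fun x => -(φ x) / G x) atTop (nhds 1) := by
    refine (tendsto_div_sub_const (s - 1)).congr' ?_
    filter_upwards [eventually_gt_atTop (max 0 (s - 1))] with x hx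
    have hx0 : 0 < x := lt_of_le_of_lt (le_max_left _ _) hx
    have hxs : s - 1 < x := lt_of_le_of_lt (le_max_right _ _) hx
    rw [hGfac x hx0]
    show x / (x - (s - 1)) = -(x ^ (s - 1) * exp (-x)) / (x ^ (s - 2) * (s - 1 - x) * exp (-x))
    have hxs1 : x ^ (s - 1) = x ^ (s - 2) * x := by
      rw [← Real.rpow_add_one hx0.ne' (s - 2)]; ring_nf
    rw [hxs1]
    have hp : x ^ (s - 2) ≠ 0 := (Real.rpow_pos_of_pos hx0 _).ne'
    have he : exp (-x) ≠ 0 := (exp_pos _).ne'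
    have h1 : x - (s - 1) ≠ 0 := by linarith
    rw [div_eq_div_iff h1 (by exact mul_ne_zero (mul_ne_zero hp (by linarith)) he)]
    ring
  exact HasDerivAt.lhopital_zero_atTop hf' hg' hGne hf0 hg0 hdiv
end

section
/- Let α > 0, β > 0, d > 0, ρ > 0 and set c₁ = 2/α, a = β d^α, b₁ = c₁ π ρ Γ(2/α). Define, for each positive integer K, P(K) = b₁ c₁ ∫₀^∞ (1 − e^{−a x})^K e^{−b₁ x^{−c₁}} x^{−1−c₁} dx. Then for every integer K ≥ 2, P(K) ≥ (1 − 1/K)^K · (1 − exp(−a^{c₁} b₁ / (ln K)^{c₁})). -/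
open MeasureTheory Real

/-- Lower bound for the half-duplex secrecy outage probability with
`K ≥ 2` antennas:
`P(K) ≥ (1 - 1/K)^K (1 - exp (-a^{c₁} b₁ / (ln K)^{c₁}))`. -/
theorem hd_secrecy_outage_lower_bound
    (α β d ρ : ℝ) (hα : 0 < α) (hβ : 0 < β) (hd : 0 < d) (hρ : 0 < ρ)
    (c₁ a b₁ : ℝ)
    (hc₁ : c₁ = 2 / α) (ha : a = β * d ^ α)
    (hb₁ : b₁ = c₁ * Real.pi * ρ * Real.Gamma (2 / α))
    (P : ℕ → ℝ)
    (hP : ∀ K : ℕ, P K =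
      b₁ * c₁ * ∫ x in Set.Ioi (0:ℝ),
        (1 - exp (-(a * x))) ^ K * exp (-(b₁ * x ^ (-c₁))) * x ^ (-1 - c₁))
    (K : ℕ) (hK : 2 ≤ K) :
    (1 - 1 / (K : ℝ)) ^ K * (1 - exp (-(a ^ c₁ * b₁ / (Real.log K) ^ c₁))) ≤ P K := by
  have hc : 0 < c₁ := by rw [hc₁]; positivity
  have ha' : 0 < a := by rw [ha]; positivity
  have hΓ : 0 < Real.Gamma (2 / α) := Real.Gamma_pos_of_pos (by positivity)
  have hb : 0 < b₁ := by rw [hb₁]; positivity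
  have hK1 : (1 : ℝ) < K := by exact_mod_cast lt_of_lt_of_le one_lt_two hK
  have hlog : 0 < Real.log K := Real.log_pos hK1
  set x₀ : ℝ := Real.log K / a with hx₀def
  have hx₀ : 0 < x₀ := div_pos hlog ha'
  set G : ℝ → ℝ := fun x => exp (-(b₁ * x ^ (-c₁))) with hGdef
  set g' : ℝ → ℝ := fun x => b₁ * c₁ * (exp (-(b₁ * x ^ (-c₁))) * x ^ (-1 - c₁)) with hg'def
  -- derivative
  have hderiv : ∀ x : ℝ, 0 < x → HasDerivAt G (g' x) x := by
    intro x hx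
    have h1 : HasDerivAt (fun y : ℝ => y ^ (-c₁)) (-c₁ * x ^ (-c₁ - 1)) x :=
      Real.hasDerivAt_rpow_const (Or.inl (ne_of_gt hx))
    have h2 : HasDerivAt (fun y : ℝ => -(b₁ * y ^ (-c₁))) (-(b₁ * (-c₁ * x ^ (-c₁ - 1)))) x :=
      (h1.const_mul b₁).neg
    have h3 := h2.exp
    convert h3 using 1
    rw [show (-c₁ - 1) = (-1 - c₁) by ring]
    ring
  have hg'nonneg : ∀ x : ℝ, 0 < x → 0 ≤ g' x := by
    intro x hx
    have h : (0:ℝ) ≤ x ^ (-1 - c₁) := Real.rpow_nonneg hx.le _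
    have h2 : (0:ℝ) ≤ exp (-(b₁ * x ^ (-c₁))) := (Real.exp_pos _).le
    positivity
  have htop : Filter.Tendsto G Filter.atTop (nhds 1) := by
    have h0 : Filter.Tendsto (fun x : ℝ => x ^ (-c₁)) Filter.atTop (nhds 0) :=
      tendsto_rpow_neg_atTop hc
    have h1 : Filter.Tendsto (fun x : ℝ => -(b₁ * x ^ (-c₁))) Filter.atTop
        (nhds (-(b₁ * 0))) := (h0.const_mul b₁).neg
    have := (Real.continuous_exp.tendsto _).comp h1
    simpa [Function.comp_def] using this
  -- integral over Ioi x₀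
  have hcont_x₀ : ContinuousWithinAt G (Set.Ici x₀) x₀ :=
    (hderiv x₀ hx₀).continuousAt.continuousWithinAt
  have hderiv_x₀ : ∀ x ∈ Set.Ioi x₀, HasDerivAt G (g' x) x :=
    fun x hx => hderiv x (hx₀.trans hx)
  have hpos_x₀ : ∀ x ∈ Set.Ioi x₀, 0 ≤ g' x := fun x hx => hg'nonneg x (hx₀.trans hx)
  have hint_x₀ : ∫ x in Set.Ioi x₀, g' x = 1 - G x₀ :=
    integral_Ioi_of_hasDerivAt_of_nonneg hcont_x₀ hderiv_x₀ hpos_x₀ htop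
  have hIntOn_x₀ : IntegrableOn g' (Set.Ioi x₀) :=
    integrableOn_Ioi_deriv_of_nonneg hcont_x₀ hderiv_x₀ hpos_x₀ htop
  -- integrability of g' on Ioi 0, via the modified function F
  set F : ℝ → ℝ := fun x => if x ≤ 0 then 0 else G x with hFdef
  have hGzero : Filter.Tendsto G (nhdsWithin 0 (Set.Ioi 0)) (nhds 0) := by
    have h1 : Filter.Tendsto (fun x : ℝ => x ^ (-c₁)) (nhdsWithin 0 (Set.Ioi 0))
        Filter.atTop := by
      have h2 : Filter.Tendsto (fun x : ℝ => x⁻¹ ^ c₁) (nhdsWithin 0 (Set.Ioi 0))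
          Filter.atTop := (tendsto_rpow_atTop hc).comp tendsto_inv_nhdsGT_zero
      refine h2.congr' ?_
      filter_upwards [self_mem_nhdsWithin] with x hx
      rw [Real.rpow_neg (le_of_lt hx), ← Real.inv_rpow (le_of_lt hx)]
    have h3 : Filter.Tendsto (fun x : ℝ => -(b₁ * x ^ (-c₁))) (nhdsWithin 0 (Set.Ioi 0))
        Filter.atBot :=
      (Filter.tendsto_neg_atTop_atBot).comp (h1.const_mul_atTop hb)
    exact Real.tendsto_exp_atBot.comp h3
  have hFcont : ContinuousWithinAt F (Set.Ici (0:ℝ)) 0 := by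
    have hF0 : F 0 = 0 := by simp [hFdef]
    rw [ContinuousWithinAt, hF0]
    have hsplit : Set.Ici (0:ℝ) = {0} ∪ Set.Ioi 0 := by
      ext x; simp [le_iff_lt_or_eq, or_comm, eq_comm]
    rw [hsplit, nhdsWithin_union]
    refine Filter.Tendsto.sup ?_ ?_
    · rw [nhdsWithin_singleton]
      rw [Filter.tendsto_pure_left]
      intro s hs
      simpa [hF0] using mem_of_mem_nhds hs
    · refine hGzero.congr' ?_
      filter_upwards [self_mem_nhdsWithin] with x hx
      simp [hFdef, not_le.mpr (Set.mem_Ioi.mp hx)]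
  have hFderiv : ∀ x ∈ Set.Ioi (0:ℝ), HasDerivAt F (g' x) x := by
    intro x hx
    refine (hderiv x hx).congr_of_eventuallyEq ?_
    filter_upwards [Ioi_mem_nhds hx] with y hy
    simp [hFdef, not_le.mpr (Set.mem_Ioi.mp hy)]
  have hFtop : Filter.Tendsto F Filter.atTop (nhds 1) := by
    refine htop.congr' ?_
    filter_upwards [Filter.Ioi_mem_atTop 0] with x hx
    simp [hFdef, not_le.mpr (Set.mem_Ioi.mp hx)]
  have hpos0 : ∀ x ∈ Set.Ioi (0:ℝ), 0 ≤ g' x := fun x hx => hg'nonneg x hx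
  have hIntOn0 : IntegrableOn g' (Set.Ioi (0:ℝ)) :=
    integrableOn_Ioi_deriv_of_nonneg hFcont hFderiv hpos0 hFtop
  -- the integrand
  set H : ℝ → ℝ := fun x =>
    b₁ * c₁ * ((1 - exp (-(a * x))) ^ K * exp (-(b₁ * x ^ (-c₁))) * x ^ (-1 - c₁)) with hHdef
  have hPK : P K = ∫ x in Set.Ioi (0:ℝ), H x := by
    rw [hP K, ← integral_const_mul]
  -- bounds on the factor (1 - exp(-(a x)))^K
  have hfac : ∀ x : ℝ, 0 < x → 0 ≤ (1 - exp (-(a * x))) ^ K ∧ (1 - exp (-(a * x))) ^ K ≤ 1 := by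
    intro x hx
    have h1 : exp (-(a * x)) ≤ 1 := by
      rw [Real.exp_le_one_iff]; nlinarith [mul_pos ha' hx]
    have h2 : (0:ℝ) < exp (-(a * x)) := Real.exp_pos _
    constructor
    · exact pow_nonneg (by linarith) K
    · exact pow_le_one₀ (by linarith) (by linarith)
  have hHnonneg : ∀ x : ℝ, 0 < x → 0 ≤ H x := by
    intro x hx
    have h := (hfac x hx).1
    have h1 : (0:ℝ) ≤ x ^ (-1 - c₁) := Real.rpow_nonneg hx.le _
    have h2 : (0:ℝ) ≤ exp (-(b₁ * x ^ (-c₁))) := (Real.exp_pos _).le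
    have := mul_nonneg (mul_nonneg h h2) h1
    positivity
  have hHle : ∀ x : ℝ, 0 < x → H x ≤ g' x := by
    intro x hx
    have h := hfac x hx
    have h1 : (0:ℝ) ≤ x ^ (-1 - c₁) := Real.rpow_nonneg hx.le _
    have h2 : (0:ℝ) ≤ exp (-(b₁ * x ^ (-c₁))) := (Real.exp_pos _).le
    have key : (1 - exp (-(a * x))) ^ K * exp (-(b₁ * x ^ (-c₁))) * x ^ (-1 - c₁)
        ≤ exp (-(b₁ * x ^ (-c₁))) * x ^ (-1 - c₁) := by
      have := mul_le_of_le_one_left (mul_nonneg h2 h1) h.2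
      calc (1 - exp (-(a * x))) ^ K * exp (-(b₁ * x ^ (-c₁))) * x ^ (-1 - c₁)
          = (1 - exp (-(a * x))) ^ K * (exp (-(b₁ * x ^ (-c₁))) * x ^ (-1 - c₁)) := by ring
        _ ≤ exp (-(b₁ * x ^ (-c₁))) * x ^ (-1 - c₁) := this
    exact mul_le_mul_of_nonneg_left key (by positivity)
  -- measurability of H on Ioi 0
  have hHmeas : AEStronglyMeasurable H (volume.restrict (Set.Ioi (0:ℝ))) := by
    have hcont : ContinuousOn H (Set.Ioi (0:ℝ)) := by
      have hr1 : ContinuousOn (fun x : ℝ => x ^ (-c₁)) (Set.Ioi (0:ℝ)) := by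
        intro x hx
        exact (Real.continuousAt_rpow_const x (-c₁) (Or.inl (ne_of_gt hx))).continuousWithinAt
      have hr2 : ContinuousOn (fun x : ℝ => x ^ (-1 - c₁)) (Set.Ioi (0:ℝ)) := by
        intro x hx
        exact (Real.continuousAt_rpow_const x (-1 - c₁)
          (Or.inl (ne_of_gt hx))).continuousWithinAt
      have h1 : ContinuousOn (fun x : ℝ => (1 - exp (-(a * x))) ^ K) (Set.Ioi (0:ℝ)) :=
        (((continuous_const.sub (Real.continuous_exp.comp
          ((continuous_const.mul continuous_id).neg))).pow K)).continuousOn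
      exact (continuousOn_const.mul
        ((h1.mul (Real.continuous_exp.comp_continuousOn
          ((continuousOn_const.mul hr1).neg))).mul hr2))
    exact hcont.aestronglyMeasurable measurableSet_Ioi
  have hHint : IntegrableOn H (Set.Ioi (0:ℝ)) := by
    refine hIntOn0.mono' hHmeas ?_
    filter_upwards [ae_restrict_mem measurableSet_Ioi] with x hx
    rw [Real.norm_eq_abs, abs_of_nonneg (hHnonneg x hx)]
    exact hHle x hx
  -- step 1
  have step1 : ∫ x in Set.Ioi x₀, H x ≤ ∫ x in Set.Ioi (0:ℝ), H x := by
    refine setIntegral_mono_set hHint ?_ ?_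
    · filter_upwards [ae_restrict_mem measurableSet_Ioi] with x hx
      exact hHnonneg x hx
    · exact (Set.Ioi_subset_Ioi hx₀.le).eventuallyLE
  -- step 2
  have step2 : ∫ x in Set.Ioi x₀, (1 - 1 / (K:ℝ)) ^ K * g' x ≤ ∫ x in Set.Ioi x₀, H x := by
    refine setIntegral_mono_on ((hIntOn_x₀.const_mul _)) (hHint.mono_set
      (Set.Ioi_subset_Ioi hx₀.le)) measurableSet_Ioi ?_
    intro x hx
    have hxpos : 0 < x := hx₀.trans hx
    have hK0 : (0:ℝ) < K := by positivity
    have hexp : exp (-(a * x)) ≤ 1 / (K:ℝ) := by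
      have h1 : Real.log K < a * x := by
        have := (div_lt_iff₀ ha').mp hx
        linarith [this]
      have h3 : exp (-(Real.log K)) = 1 / (K:ℝ) := by
        rw [Real.exp_neg, Real.exp_log hK0, one_div]
      rw [← h3]
      exact (Real.exp_le_exp.mpr (by linarith))
    have h1K : 1 / (K:ℝ) ≤ 1 := by
      rw [div_le_one hK0]; linarith
    have hpow : (1 - 1 / (K:ℝ)) ^ K ≤ (1 - exp (-(a * x))) ^ K :=
      pow_le_pow_left₀ (by linarith) (by linarith) K
    have h1 : (0:ℝ) ≤ x ^ (-1 - c₁) := Real.rpow_nonneg hxpos.le _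
    have h2 : (0:ℝ) ≤ exp (-(b₁ * x ^ (-c₁))) := (Real.exp_pos _).le
    calc (1 - 1 / (K:ℝ)) ^ K * g' x
        = b₁ * c₁ * ((1 - 1 / (K:ℝ)) ^ K * exp (-(b₁ * x ^ (-c₁))) * x ^ (-1 - c₁)) := by
          rw [hg'def]; ring
      _ ≤ b₁ * c₁ * ((1 - exp (-(a * x))) ^ K * exp (-(b₁ * x ^ (-c₁))) * x ^ (-1 - c₁)) := by
          apply mul_le_mul_of_nonneg_left _ (by positivity)
          exact mul_le_mul_of_nonneg_right (mul_le_mul_of_nonneg_right hpow h2) h1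
      _ = H x := rfl
  -- step 3 : compute the left integral
  have step3 : ∫ x in Set.Ioi x₀, (1 - 1 / (K:ℝ)) ^ K * g' x
      = (1 - 1 / (K:ℝ)) ^ K * (1 - G x₀) := by
    rw [integral_const_mul, hint_x₀]
  -- identify G x₀ with the exponential in the statement
  have hx₀pow : b₁ * x₀ ^ (-c₁) = a ^ c₁ * b₁ / Real.log K ^ c₁ := by
    rw [hx₀def, Real.div_rpow hlog.le ha'.le, Real.rpow_neg hlog.le, Real.rpow_neg ha'.le]
    have hl : Real.log K ^ c₁ ≠ 0 := ne_of_gt (Real.rpow_pos_of_pos hlog _)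
    have haa : a ^ c₁ ≠ 0 := ne_of_gt (Real.rpow_pos_of_pos ha' _)
    field_simp
  have hGx₀ : 1 - exp (-(a ^ c₁ * b₁ / Real.log K ^ c₁)) = 1 - G x₀ := by
    rw [hGdef]; rw [← hx₀pow]
  rw [hPK, hGx₀]
  calc (1 - 1 / (K:ℝ)) ^ K * (1 - G x₀)
      = ∫ x in Set.Ioi x₀, (1 - 1 / (K:ℝ)) ^ K * g' x := step3.symm
    _ ≤ ∫ x in Set.Ioi x₀, H x := step2
    _ ≤ ∫ x in Set.Ioi (0:ℝ), H x := step1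
end

section
/- Let α > 0, β > 0, d > 0, ρ > 0 and set c₁ = 2/α, a = β d^α, b₁ = c₁ π ρ Γ(2/α). Define, for each positive integer K, P(K) = b₁ c₁ ∫₀^∞ (1 − e^{−a x})^K e^{−b₁ x^{−c₁}} x^{−1−c₁} dx. Then liminf_{K→∞} (ln K)^{2/α} · P(K) ≥ π ρ d² β^{2/α} Γ(1 + 2/α) / e. In particular, the secrecy outage probability decays at most like 1/(ln K)^{2/α} as the number of antennas K grows. -/
open MeasureTheory Real Filter Topology

/-- `exp (-u) ≤ 4 / u²` for `u > 0`. -/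
lemma aux_exp_neg_le {u : ℝ} (hu : 0 < u) : Real.exp (-u) ≤ 4 / u ^ 2 := by
  have h2 : u / 2 + 1 ≤ Real.exp (u / 2) := Real.add_one_le_exp (u / 2)
  have h1 : u ^ 2 / 4 ≤ Real.exp u := by
    have h3 : (u / 2 + 1) ^ 2 ≤ (Real.exp (u / 2)) ^ 2 :=
      pow_le_pow_left₀ (by positivity) h2 2
    have h4 : (Real.exp (u / 2)) ^ 2 = Real.exp u := by
      rw [sq, ← Real.exp_add]; ring_nf
    nlinarith
  have h5 : (0:ℝ) < u ^ 2 := by positivity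
  rw [Real.exp_neg, inv_eq_one_div, div_le_div_iff₀ (Real.exp_pos u) h5]
  nlinarith

/-- The derivative of the Fréchet CDF `x ↦ exp (-(b₁ x^{-c₁}))`. -/
lemma aux_deriv (b₁ c₁ : ℝ) {x : ℝ} (hx : 0 < x) :
    HasDerivAt (fun y : ℝ => Real.exp (-(b₁ * y ^ (-c₁))))
      (b₁ * c₁ * (Real.exp (-(b₁ * x ^ (-c₁))) * x ^ (-1 - c₁))) x := by
  have h1 : HasDerivAt (fun y : ℝ => y ^ (-c₁)) (-c₁ * x ^ (-c₁ - 1)) x :=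
    Real.hasDerivAt_rpow_const (Or.inl hx.ne')
  have h2 := ((h1.const_mul b₁).neg)
  have h3 := (show HasDerivAt (fun y : ℝ => -(b₁ * y ^ (-c₁))) _ x from h2).exp
  convert h3 using 1
  rw [show (-1 - c₁ : ℝ) = -c₁ - 1 by ring]
  ring

lemma aux_ftc (b₁ c₁ t : ℝ) (hb : 0 < b₁) (hc : 0 < c₁) (ht : 0 < t) :
    IntegrableOn (fun x : ℝ => b₁ * c₁ * (Real.exp (-(b₁ * x ^ (-c₁))) * x ^ (-1 - c₁)))
        (Set.Ioi t) ∧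
      ∫ x in Set.Ioi t, b₁ * c₁ * (Real.exp (-(b₁ * x ^ (-c₁))) * x ^ (-1 - c₁)) =
        1 - Real.exp (-(b₁ * t ^ (-c₁))) := by
  have hderiv : ∀ x ∈ Set.Ioi t, HasDerivAt (fun y : ℝ => Real.exp (-(b₁ * y ^ (-c₁))))
      (b₁ * c₁ * (Real.exp (-(b₁ * x ^ (-c₁))) * x ^ (-1 - c₁))) x :=
    fun x hx => aux_deriv b₁ c₁ (ht.trans hx)
  have hpos : ∀ x ∈ Set.Ioi t,
      0 ≤ b₁ * c₁ * (Real.exp (-(b₁ * x ^ (-c₁))) * x ^ (-1 - c₁)) := by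
    intro x hx
    have hx0 : (0:ℝ) < x := ht.trans hx
    have h := Real.rpow_pos_of_pos hx0 (-1 - c₁)
    positivity
  have hcont : ContinuousWithinAt (fun y : ℝ => Real.exp (-(b₁ * y ^ (-c₁)))) (Set.Ici t) t :=
    (aux_deriv b₁ c₁ ht).continuousAt.continuousWithinAt
  have htend : Tendsto (fun y : ℝ => Real.exp (-(b₁ * y ^ (-c₁)))) atTop (𝓝 1) := by
    have h1 : Tendsto (fun y : ℝ => -(b₁ * y ^ (-c₁))) atTop (𝓝 0) := by
      have h2 := (tendsto_rpow_neg_atTop hc).const_mul b₁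
      simpa using h2.neg
    have h3 := (Real.continuous_exp.tendsto 0).comp h1
    simpa [Function.comp_def] using h3
  exact ⟨integrableOn_Ioi_deriv_of_nonneg hcont hderiv hpos htend,
    integral_Ioi_of_hasDerivAt_of_nonneg hcont hderiv hpos htend⟩

lemma aux_cont_G (b₁ c₁ : ℝ) :
    ContinuousOn (fun x : ℝ => Real.exp (-(b₁ * x ^ (-c₁))) * x ^ (-1 - c₁)) (Set.Ioi 0) := by
  intro x hx
  have hx0 : (0:ℝ) < x := hx
  have h1 : ContinuousAt (fun y : ℝ => y ^ (-c₁)) x :=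
    Real.continuousAt_rpow_const x _ (Or.inl hx0.ne')
  have h2 : ContinuousAt (fun y : ℝ => y ^ (-1 - c₁)) x :=
    Real.continuousAt_rpow_const x _ (Or.inl hx0.ne')
  exact ((Real.continuous_exp.continuousAt.comp ((h1.const_mul b₁).neg)).mul
    h2).continuousWithinAt

lemma aux_int_G (b₁ c₁ : ℝ) (hb : 0 < b₁) (hc : 0 < c₁) :
    IntegrableOn (fun x : ℝ => Real.exp (-(b₁ * x ^ (-c₁))) * x ^ (-1 - c₁)) (Set.Ioi 0) := by
  rw [← Set.Ioc_union_Ioi_eq_Ioi (zero_le_one : (0:ℝ) ≤ 1)]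
  refine IntegrableOn.union ?_ ?_
  · -- on (0, 1]
    have hbound : IntegrableOn (fun x : ℝ => 4 / b₁ ^ 2 * x ^ (c₁ - 1)) (Set.Ioc 0 1) := by
      rw [integrableOn_Ioc_iff_integrableOn_Ioo]
      exact ((intervalIntegral.integrableOn_Ioo_rpow_iff one_pos).mpr (by linarith)).const_mul _
    refine Integrable.mono' hbound ?_ ?_
    · exact ((aux_cont_G b₁ c₁).mono (Set.Ioc_subset_Ioi_self)).aestronglyMeasurable
        measurableSet_Ioc
    · refine (ae_restrict_iff' measurableSet_Ioc).2 (Filter.Eventually.of_forall ?_)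
      intro x hx
      have hx0 : (0:ℝ) < x := hx.1
      have hu : (0:ℝ) < b₁ * x ^ (-c₁) := by
        have := Real.rpow_pos_of_pos hx0 (-c₁); positivity
      have h1 : Real.exp (-(b₁ * x ^ (-c₁))) ≤ 4 / (b₁ * x ^ (-c₁)) ^ 2 :=
        aux_exp_neg_le hu
      have hG0 : 0 ≤ Real.exp (-(b₁ * x ^ (-c₁))) * x ^ (-1 - c₁) := by
        have := Real.rpow_pos_of_pos hx0 (-1 - c₁); positivity
      rw [Real.norm_eq_abs, abs_of_nonneg hG0]
      have h2 : (4 / (b₁ * x ^ (-c₁)) ^ 2) * x ^ (-1 - c₁) = 4 / b₁ ^ 2 * x ^ (c₁ - 1) := by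
        have e1 : (x ^ (-c₁)) ^ 2 = x ^ (-c₁ * 2) := by
          rw [← Real.rpow_natCast (x ^ (-c₁)) 2, ← Real.rpow_mul hx0.le]
          norm_num
        have e2 : x ^ (-1 - c₁) = x ^ (c₁ - 1) * x ^ (-c₁ * 2) := by
          rw [← Real.rpow_add hx0]; congr 1; ring
        have hb2 : b₁ ^ 2 ≠ 0 := by positivity
        have hxne : x ^ (-c₁ * 2) ≠ 0 := (Real.rpow_pos_of_pos hx0 _).ne'
        rw [mul_pow, e1, e2]
        field_simp
      calc Real.exp (-(b₁ * x ^ (-c₁))) * x ^ (-1 - c₁)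
          ≤ (4 / (b₁ * x ^ (-c₁)) ^ 2) * x ^ (-1 - c₁) := by
            have := (Real.rpow_pos_of_pos hx0 (-1 - c₁)).le
            exact mul_le_mul_of_nonneg_right h1 this
        _ = 4 / b₁ ^ 2 * x ^ (c₁ - 1) := h2
  · -- on (1, ∞)
    have h := (aux_ftc b₁ c₁ 1 hb hc one_pos).1
    have hne : b₁ * c₁ ≠ 0 := by positivity
    have h2 := h.const_mul (b₁ * c₁)⁻¹
    exact IntegrableOn.congr_fun h2 (fun x _ => by field_simp) measurableSet_Ioi

set_option maxHeartbeats 2000000 in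
/-- The half-duplex secrecy outage probability decays at most like
`1/(ln K)^{2/α}`: `liminf_{K→∞} (ln K)^{2/α} P(K) ≥ π ρ d² β^{2/α} Γ(1+2/α) / e`. -/
theorem hd_secrecy_outage_liminf
    (α β d ρ : ℝ) (hα : 0 < α) (hβ : 0 < β) (hd : 0 < d) (hρ : 0 < ρ)
    (c₁ a b₁ : ℝ)
    (hc₁ : c₁ = 2 / α) (ha : a = β * d ^ α)
    (hb₁ : b₁ = c₁ * Real.pi * ρ * Real.Gamma (2 / α))
    (P : ℕ → ℝ)
    (hP : ∀ K : ℕ, P K =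
      b₁ * c₁ * ∫ x in Set.Ioi (0:ℝ),
        (1 - exp (-(a * x))) ^ K * exp (-(b₁ * x ^ (-c₁))) * x ^ (-1 - c₁)) :
    Real.pi * ρ * d ^ 2 * β ^ (2 / α) * Real.Gamma (1 + 2 / α) / Real.exp 1 ≤
      Filter.liminf (fun K : ℕ => (Real.log K) ^ (2 / α) * P K) atTop := by
  have hαne : α ≠ 0 := hα.ne'
  have hc : 0 < c₁ := by rw [hc₁]; positivity
  have hapos : 0 < a := by rw [ha]; exact mul_pos hβ (Real.rpow_pos_of_pos hd α)
  have hΓ : 0 < Real.Gamma (2 / α) := Real.Gamma_pos_of_pos (by positivity)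
  have hb : 0 < b₁ := by
    rw [hb₁]; rw [hc₁]
    have h2α : (0:ℝ) < 2 / α := by positivity
    positivity
  have hbc : (0:ℝ) < b₁ * c₁ := by positivity
  set C : ℝ := b₁ * a ^ c₁ with hCdef
  have hCpos : 0 < C := mul_pos hb (Real.rpow_pos_of_pos hapos c₁)
  -- identify the constant
  have hval : Real.pi * ρ * d ^ 2 * β ^ (2 / α) * Real.Gamma (1 + 2 / α) = C := by
    have hg : Real.Gamma (1 + 2 / α) = (2 / α) * Real.Gamma (2 / α) := by
      rw [add_comm, Real.Gamma_add_one (by positivity : (2 / α : ℝ) ≠ 0)]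
    have hd2 : (d ^ α) ^ (2 / α : ℝ) = d ^ 2 := by
      rw [← Real.rpow_mul hd.le,
        show α * (2 / α) = ((2:ℕ):ℝ) by push_cast; field_simp, Real.rpow_natCast]
    have hmul : a ^ c₁ = β ^ (2 / α) * d ^ 2 := by
      rw [ha, hc₁, Real.mul_rpow hβ.le (Real.rpow_pos_of_pos hd α).le, hd2]
    rw [hCdef, hb₁, hmul, hg, hc₁]; ring
  -- associativity-normalized form of `P`
  have hPeq : ∀ K : ℕ, P K = b₁ * c₁ * ∫ x in Set.Ioi (0:ℝ),
      (1 - Real.exp (-(a * x))) ^ K *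
        (Real.exp (-(b₁ * x ^ (-c₁))) * x ^ (-1 - c₁)) := by
    intro K
    rw [hP K]
    congr 1
    exact setIntegral_congr_fun measurableSet_Ioi fun x _ => by ring
  -- nonnegativity of the integrand
  have hhnn : ∀ (K : ℕ), ∀ x ∈ Set.Ioi (0:ℝ), 0 ≤
      (1 - Real.exp (-(a * x))) ^ K *
        (Real.exp (-(b₁ * x ^ (-c₁))) * x ^ (-1 - c₁)) := by
    intro K x hx
    have hx0 : (0:ℝ) < x := hx
    have h1 : Real.exp (-(a * x)) ≤ 1 := by
      calc Real.exp (-(a * x)) ≤ Real.exp 0 := Real.exp_le_exp.mpr (by nlinarith)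
        _ = 1 := Real.exp_zero
    have h2 := (Real.rpow_pos_of_pos hx0 (-1 - c₁)).le
    have h3 : (0:ℝ) ≤ 1 - Real.exp (-(a * x)) := by linarith
    positivity
  have hintG0 := aux_int_G b₁ c₁ hb hc
  -- integrability of the full integrand
  have hinth : ∀ K : ℕ, IntegrableOn
      (fun x : ℝ => (1 - Real.exp (-(a * x))) ^ K *
        (Real.exp (-(b₁ * x ^ (-c₁))) * x ^ (-1 - c₁))) (Set.Ioi 0) := by
    intro K
    refine Integrable.mono' hintG0 ?_ ?_
    · have hcontpow : Continuous fun x : ℝ => (1 - Real.exp (-(a * x))) ^ K :=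
        (continuous_const.sub
          ((continuous_const.mul continuous_id).neg.rexp)).pow K
      exact ((hcontpow.continuousOn.mul (aux_cont_G b₁ c₁)).aestronglyMeasurable
        measurableSet_Ioi)
    · refine (ae_restrict_iff' measurableSet_Ioi).2 (Filter.Eventually.of_forall ?_)
      intro x hx
      have hx0 : (0:ℝ) < x := hx
      have h1 : Real.exp (-(a * x)) ≤ 1 := by
        calc Real.exp (-(a * x)) ≤ Real.exp 0 := Real.exp_le_exp.mpr (by nlinarith)
          _ = 1 := Real.exp_zero
      have h3 : (0:ℝ) ≤ 1 - Real.exp (-(a * x)) := by linarith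
      have h5 : (1 - Real.exp (-(a * x))) ^ K ≤ 1 :=
        pow_le_one₀ h3 (by linarith [Real.exp_pos (-(a * x))])
      have h4 : (0:ℝ) ≤ Real.exp (-(b₁ * x ^ (-c₁))) * x ^ (-1 - c₁) := by
        have h8 := (Real.rpow_pos_of_pos hx0 (-1 - c₁)).le
        positivity
      rw [Real.norm_eq_abs, abs_of_nonneg (hhnn K x hx)]
      calc (1 - Real.exp (-(a * x))) ^ K *
            (Real.exp (-(b₁ * x ^ (-c₁))) * x ^ (-1 - c₁)) ≤
          1 * (Real.exp (-(b₁ * x ^ (-c₁))) * x ^ (-1 - c₁)) :=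
            mul_le_mul_of_nonneg_right h5 h4
        _ = Real.exp (-(b₁ * x ^ (-c₁))) * x ^ (-1 - c₁) := one_mul _
  -- pointwise bound `integrand ≤ G`
  have hhleG : ∀ (K : ℕ), ∀ x ∈ Set.Ioi (0:ℝ),
      (1 - Real.exp (-(a * x))) ^ K *
        (Real.exp (-(b₁ * x ^ (-c₁))) * x ^ (-1 - c₁)) ≤
      Real.exp (-(b₁ * x ^ (-c₁))) * x ^ (-1 - c₁) := by
    intro K x hx
    have hx0 : (0:ℝ) < x := hx
    have h1 : Real.exp (-(a * x)) ≤ 1 := by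
      calc Real.exp (-(a * x)) ≤ Real.exp 0 := Real.exp_le_exp.mpr (by nlinarith)
        _ = 1 := Real.exp_zero
    have h3 : (0:ℝ) ≤ 1 - Real.exp (-(a * x)) := by linarith
    have h5 : (1 - Real.exp (-(a * x))) ^ K ≤ 1 :=
      pow_le_one₀ h3 (by linarith [Real.exp_pos (-(a * x))])
    have h4 : (0:ℝ) ≤ Real.exp (-(b₁ * x ^ (-c₁))) * x ^ (-1 - c₁) := by
      have h8 := (Real.rpow_pos_of_pos hx0 (-1 - c₁)).le
      positivity
    calc (1 - Real.exp (-(a * x))) ^ K *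
          (Real.exp (-(b₁ * x ^ (-c₁))) * x ^ (-1 - c₁)) ≤
        1 * (Real.exp (-(b₁ * x ^ (-c₁))) * x ^ (-1 - c₁)) :=
          mul_le_mul_of_nonneg_right h5 h4
      _ = _ := one_mul _
  -- nonnegativity of `P`
  have hPnn : ∀ K : ℕ, 0 ≤ P K := by
    intro K
    rw [hPeq K]
    exact mul_nonneg hbc.le (setIntegral_nonneg measurableSet_Ioi (hhnn K))
  have hvK : ∀ K : ℕ, (fun K : ℕ => (Real.log K) ^ (2 / α) * P K) K ≥ 0 := by
    intro K
    have hlog : 0 ≤ Real.log K := by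
      rcases Nat.eq_zero_or_pos K with h | h
      · simp [h]
      · exact Real.log_nonneg (by exact_mod_cast h)
    exact mul_nonneg (Real.rpow_nonneg hlog _) (hPnn K)
  -- the total mass of `G` is at most `1 / (b₁ c₁)`
  have hGle : ∫ x in Set.Ioi (0:ℝ),
      Real.exp (-(b₁ * x ^ (-c₁))) * x ^ (-1 - c₁) ≤ 1 / (b₁ * c₁) := by
    have hsm : ∀ n : ℕ, MeasurableSet (Set.Ioi ((1:ℝ)/(n+1))) := fun _ => measurableSet_Ioi
    have hmono : Monotone fun n : ℕ => Set.Ioi ((1:ℝ)/(n+1)) := by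
      intro m n hmn
      apply Set.Ioi_subset_Ioi
      apply one_div_le_one_div_of_le (by positivity)
      have : (m:ℝ) ≤ n := by exact_mod_cast hmn
      linarith
    have hunion : (⋃ n : ℕ, Set.Ioi ((1:ℝ)/(n+1))) = Set.Ioi (0:ℝ) := by
      ext x
      simp only [Set.mem_iUnion, Set.mem_Ioi]
      constructor
      · rintro ⟨n, hn⟩
        have : (0:ℝ) < 1/((n:ℝ)+1) := by positivity
        linarith
      · intro hx
        obtain ⟨n, hn⟩ := exists_nat_one_div_lt hx
        exact ⟨n, hn⟩
    have htendG := tendsto_setIntegral_of_monotone hsm hmono (by rw [hunion]; exact hintG0)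
    rw [hunion] at htendG
    refine le_of_tendsto' htendG ?_
    intro n
    have hn0 : (0:ℝ) < 1/((n:ℝ)+1) := by positivity
    have hftc := aux_ftc b₁ c₁ _ hb hc hn0
    have h2 := hftc.2
    rw [integral_const_mul] at h2
    have h3 : ∫ x in Set.Ioi ((1:ℝ)/((n:ℝ)+1)),
        Real.exp (-(b₁ * x ^ (-c₁))) * x ^ (-1 - c₁) =
        (1 - Real.exp (-(b₁ * ((1:ℝ)/((n:ℝ)+1)) ^ (-c₁)))) / (b₁ * c₁) := by
      rw [eq_div_iff hbc.ne', mul_comm]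
      exact h2
    rw [h3]
    gcongr
    linarith [(Real.exp_pos (-(b₁ * ((1:ℝ)/((n:ℝ)+1)) ^ (-c₁)))).le]
  -- the key eventual lower bound
  have hkey : ∀ K : ℕ, 3 ≤ K →
      (1 - 1 / (K:ℝ)) ^ K * ((Real.log K) ^ (2 / α) *
        (1 - Real.exp (-(b₁ * (Real.log K / a) ^ (-c₁))))) ≤
      (Real.log K) ^ (2 / α) * P K := by
    intro K hK
    have hK3 : (3:ℝ) ≤ (K:ℝ) := by exact_mod_cast hK
    have hK0 : (0:ℝ) < K := by linarith
    have hlogK : 1 ≤ Real.log K := by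
      rw [Real.le_log_iff_exp_le hK0]
      calc Real.exp 1 ≤ 2.7182818286 := Real.exp_one_lt_d9.le
        _ ≤ (K:ℝ) := by linarith
    have hlogpos : 0 < Real.log K := lt_of_lt_of_le one_pos hlogK
    have ht : 0 < Real.log K / a := div_pos hlogpos hapos
    have hcmp : ∀ x ∈ Set.Ioi (Real.log K / a),
        (1 - 1 / (K:ℝ)) ^ K * (Real.exp (-(b₁ * x ^ (-c₁))) * x ^ (-1 - c₁)) ≤
        (1 - Real.exp (-(a * x))) ^ K *
          (Real.exp (-(b₁ * x ^ (-c₁))) * x ^ (-1 - c₁)) := by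
      intro x hx
      have hx' : Real.log K / a < x := hx
      have hx0 : (0:ℝ) < x := ht.trans hx'
      have hlax : Real.log K < a * x := by
        have h6 := (div_lt_iff₀ hapos).mp hx'
        linarith [h6]
      have h1 : Real.exp (-(a * x)) ≤ 1 / (K:ℝ) := by
        calc Real.exp (-(a * x)) ≤ Real.exp (-(Real.log K)) :=
              Real.exp_le_exp.mpr (by linarith)
          _ = 1 / (K:ℝ) := by rw [Real.exp_neg, Real.exp_log hK0, one_div]
      have h2 : (0:ℝ) ≤ 1 - 1 / (K:ℝ) := by
        have h7 : 1 / (K:ℝ) ≤ 1 := by rw [div_le_one hK0]; linarith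
        linarith
      have h3 : (1 - 1 / (K:ℝ)) ^ K ≤ (1 - Real.exp (-(a * x))) ^ K :=
        pow_le_pow_left₀ h2 (by linarith) K
      have h4 : (0:ℝ) ≤ Real.exp (-(b₁ * x ^ (-c₁))) * x ^ (-1 - c₁) := by
        have h8 := (Real.rpow_pos_of_pos hx0 (-1 - c₁)).le
        positivity
      exact mul_le_mul_of_nonneg_right h3 h4
    have hintGt : IntegrableOn
        (fun x : ℝ => Real.exp (-(b₁ * x ^ (-c₁))) * x ^ (-1 - c₁))
        (Set.Ioi (Real.log K / a)) := hintG0.mono_set (Set.Ioi_subset_Ioi ht.le)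
    have hintht : IntegrableOn
        (fun x : ℝ => (1 - Real.exp (-(a * x))) ^ K *
          (Real.exp (-(b₁ * x ^ (-c₁))) * x ^ (-1 - c₁)))
        (Set.Ioi (Real.log K / a)) := (hinth K).mono_set (Set.Ioi_subset_Ioi ht.le)
    have hftc := aux_ftc b₁ c₁ (Real.log K / a) hb hc ht
    have step1 : (1 - 1 / (K:ℝ)) ^ K *
        (1 - Real.exp (-(b₁ * (Real.log K / a) ^ (-c₁)))) ≤ P K := by
      calc (1 - 1 / (K:ℝ)) ^ K * (1 - Real.exp (-(b₁ * (Real.log K / a) ^ (-c₁))))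
          = (1 - 1 / (K:ℝ)) ^ K * ∫ x in Set.Ioi (Real.log K / a),
              b₁ * c₁ * (Real.exp (-(b₁ * x ^ (-c₁))) * x ^ (-1 - c₁)) := by
            rw [hftc.2]
        _ = b₁ * c₁ * ∫ x in Set.Ioi (Real.log K / a),
              (1 - 1 / (K:ℝ)) ^ K * (Real.exp (-(b₁ * x ^ (-c₁))) * x ^ (-1 - c₁)) := by
            rw [integral_const_mul, integral_const_mul]; ring
        _ ≤ b₁ * c₁ * ∫ x in Set.Ioi (Real.log K / a),
              (1 - Real.exp (-(a * x))) ^ K *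
                (Real.exp (-(b₁ * x ^ (-c₁))) * x ^ (-1 - c₁)) := by
            refine mul_le_mul_of_nonneg_left ?_ hbc.le
            exact setIntegral_mono_on (hintGt.const_mul _) hintht measurableSet_Ioi hcmp
        _ ≤ b₁ * c₁ * ∫ x in Set.Ioi (0:ℝ),
              (1 - Real.exp (-(a * x))) ^ K *
                (Real.exp (-(b₁ * x ^ (-c₁))) * x ^ (-1 - c₁)) := by
            refine mul_le_mul_of_nonneg_left ?_ hbc.le
            refine setIntegral_mono_set (hinth K) ?_ ?_
            · exact (ae_restrict_iff' measurableSet_Ioi).2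
                (Filter.Eventually.of_forall (hhnn K))
            · exact (Set.Ioi_subset_Ioi ht.le).eventuallyLE
        _ = P K := (hPeq K).symm
    have hlpow : 0 ≤ (Real.log K) ^ (2 / α) := Real.rpow_nonneg hlogpos.le _
    calc (1 - 1 / (K:ℝ)) ^ K * ((Real.log K) ^ (2 / α) *
            (1 - Real.exp (-(b₁ * (Real.log K / a) ^ (-c₁)))))
        = (Real.log K) ^ (2 / α) * ((1 - 1 / (K:ℝ)) ^ K *
            (1 - Real.exp (-(b₁ * (Real.log K / a) ^ (-c₁))))) := by ring
      _ ≤ (Real.log K) ^ (2 / α) * P K := mul_le_mul_of_nonneg_left step1 hlpow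
  -- eventual upper bound, needed for coboundedness of the liminf
  have hcob : ∀ᶠ K : ℕ in atTop,
      (Real.log K) ^ (2 / α) * P K ≤ 1 + b₁ * (2 * a) ^ c₁ := by
    have hterm : Tendsto (fun K : ℕ => (K:ℝ) ^ c₁ * Real.exp (-((K:ℝ) ^ ((1:ℝ)/2))))
        atTop (𝓝 0) := by
      have hy : Tendsto (fun K : ℕ => (K:ℝ) ^ ((1:ℝ)/2)) atTop atTop :=
        (tendsto_rpow_atTop (by norm_num)).comp tendsto_natCast_atTop_atTop
      have h0 := (tendsto_rpow_mul_exp_neg_mul_atTop_nhds_zero (2*c₁) 1 one_pos).comp hy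
      refine h0.congr' ?_
      filter_upwards [eventually_ge_atTop 1] with K hK
      have hK0 : (0:ℝ) < K := by exact_mod_cast hK
      simp only [Function.comp]
      rw [← Real.rpow_mul hK0.le, show (1:ℝ)/2 * (2*c₁) = c₁ by ring, neg_one_mul]
    have hsmall : ∀ᶠ K : ℕ in atTop,
        (K:ℝ) ^ c₁ * Real.exp (-((K:ℝ) ^ ((1:ℝ)/2))) ≤ 1 :=
      hterm.eventually (eventually_le_nhds one_pos)
    filter_upwards [eventually_ge_atTop 3, hsmall] with K hK hKs
    have hK3 : (3:ℝ) ≤ (K:ℝ) := by exact_mod_cast hK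
    have hK0 : (0:ℝ) < K := by linarith
    have hlogK : 1 ≤ Real.log K := by
      rw [Real.le_log_iff_exp_le hK0]
      calc Real.exp 1 ≤ 2.7182818286 := Real.exp_one_lt_d9.le
        _ ≤ (K:ℝ) := by linarith
    have hlogpos : 0 < Real.log K := lt_of_lt_of_le one_pos hlogK
    have h2a : (0:ℝ) < 2 * a := by positivity
    have hT : 0 < Real.log K / (2 * a) := div_pos hlogpos h2a
    have hIocInt : IntegrableOn
        (fun x : ℝ => (1 - Real.exp (-(a * x))) ^ K *
          (Real.exp (-(b₁ * x ^ (-c₁))) * x ^ (-1 - c₁)))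
        (Set.Ioc 0 (Real.log K / (2 * a))) :=
      (hinth K).mono_set Set.Ioc_subset_Ioi_self
    have hIoiInt : IntegrableOn
        (fun x : ℝ => (1 - Real.exp (-(a * x))) ^ K *
          (Real.exp (-(b₁ * x ^ (-c₁))) * x ^ (-1 - c₁)))
        (Set.Ioi (Real.log K / (2 * a))) :=
      (hinth K).mono_set (Set.Ioi_subset_Ioi hT.le)
    have hGIoc : IntegrableOn
        (fun x : ℝ => Real.exp (-(b₁ * x ^ (-c₁))) * x ^ (-1 - c₁))
        (Set.Ioc 0 (Real.log K / (2 * a))) := hintG0.mono_set Set.Ioc_subset_Ioi_self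
    have hGIoi : IntegrableOn
        (fun x : ℝ => Real.exp (-(b₁ * x ^ (-c₁))) * x ^ (-1 - c₁))
        (Set.Ioi (Real.log K / (2 * a))) := hintG0.mono_set (Set.Ioi_subset_Ioi hT.le)
    have hsplit : (∫ x in Set.Ioi (0:ℝ),
        (1 - Real.exp (-(a * x))) ^ K *
          (Real.exp (-(b₁ * x ^ (-c₁))) * x ^ (-1 - c₁))) =
        (∫ x in Set.Ioc (0:ℝ) (Real.log K / (2 * a)),
          (1 - Real.exp (-(a * x))) ^ K *
            (Real.exp (-(b₁ * x ^ (-c₁))) * x ^ (-1 - c₁))) +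
        ∫ x in Set.Ioi (Real.log K / (2 * a)),
          (1 - Real.exp (-(a * x))) ^ K *
            (Real.exp (-(b₁ * x ^ (-c₁))) * x ^ (-1 - c₁)) := by
      rw [← setIntegral_union (Set.Ioc_disjoint_Ioi le_rfl) measurableSet_Ioi
        hIocInt hIoiInt, Set.Ioc_union_Ioi_eq_Ioi hT.le]
    have hbase0 : (0:ℝ) ≤ 1 - Real.exp (-(a * (Real.log K / (2 * a)))) := by
      have h1 : Real.exp (-(a * (Real.log K / (2 * a)))) ≤ 1 := by
        calc Real.exp (-(a * (Real.log K / (2 * a)))) ≤ Real.exp 0 := by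
              apply Real.exp_le_exp.mpr
              have := mul_pos hapos hT
              linarith
          _ = 1 := Real.exp_zero
      linarith
    have hbnd1 : (∫ x in Set.Ioc (0:ℝ) (Real.log K / (2 * a)),
        (1 - Real.exp (-(a * x))) ^ K *
          (Real.exp (-(b₁ * x ^ (-c₁))) * x ^ (-1 - c₁))) ≤
        (1 - Real.exp (-(a * (Real.log K / (2 * a))))) ^ K * (1 / (b₁ * c₁)) := by
      have hptw : ∀ x ∈ Set.Ioc (0:ℝ) (Real.log K / (2 * a)),
          (1 - Real.exp (-(a * x))) ^ K *
            (Real.exp (-(b₁ * x ^ (-c₁))) * x ^ (-1 - c₁)) ≤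
          (1 - Real.exp (-(a * (Real.log K / (2 * a))))) ^ K *
            (Real.exp (-(b₁ * x ^ (-c₁))) * x ^ (-1 - c₁)) := by
        intro x hx
        have hx0 : (0:ℝ) < x := hx.1
        have hax : a * x ≤ a * (Real.log K / (2 * a)) :=
          mul_le_mul_of_nonneg_left hx.2 hapos.le
        have h1 : Real.exp (-(a * (Real.log K / (2 * a)))) ≤ Real.exp (-(a * x)) :=
          Real.exp_le_exp.mpr (by linarith)
        have h3 : (0:ℝ) ≤ 1 - Real.exp (-(a * x)) := by
          have : Real.exp (-(a * x)) ≤ 1 := by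
            calc Real.exp (-(a * x)) ≤ Real.exp 0 :=
                  Real.exp_le_exp.mpr (by nlinarith)
              _ = 1 := Real.exp_zero
          linarith
        have h4 : (0:ℝ) ≤ Real.exp (-(b₁ * x ^ (-c₁))) * x ^ (-1 - c₁) := by
          have h8 := (Real.rpow_pos_of_pos hx0 (-1 - c₁)).le
          positivity
        exact mul_le_mul_of_nonneg_right (pow_le_pow_left₀ h3 (by linarith) K) h4
      calc (∫ x in Set.Ioc (0:ℝ) (Real.log K / (2 * a)),
            (1 - Real.exp (-(a * x))) ^ K *
              (Real.exp (-(b₁ * x ^ (-c₁))) * x ^ (-1 - c₁)))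
          ≤ ∫ x in Set.Ioc (0:ℝ) (Real.log K / (2 * a)),
              (1 - Real.exp (-(a * (Real.log K / (2 * a))))) ^ K *
                (Real.exp (-(b₁ * x ^ (-c₁))) * x ^ (-1 - c₁)) :=
            setIntegral_mono_on hIocInt (hGIoc.const_mul _) measurableSet_Ioc hptw
        _ = (1 - Real.exp (-(a * (Real.log K / (2 * a))))) ^ K *
              ∫ x in Set.Ioc (0:ℝ) (Real.log K / (2 * a)),
                Real.exp (-(b₁ * x ^ (-c₁))) * x ^ (-1 - c₁) := integral_const_mul _ _
        _ ≤ (1 - Real.exp (-(a * (Real.log K / (2 * a))))) ^ K * (1 / (b₁ * c₁)) := by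
            refine mul_le_mul_of_nonneg_left ?_ (pow_nonneg hbase0 K)
            calc (∫ x in Set.Ioc (0:ℝ) (Real.log K / (2 * a)),
                  Real.exp (-(b₁ * x ^ (-c₁))) * x ^ (-1 - c₁))
                ≤ ∫ x in Set.Ioi (0:ℝ),
                    Real.exp (-(b₁ * x ^ (-c₁))) * x ^ (-1 - c₁) := by
                  refine setIntegral_mono_set hintG0 ?_ ?_
                  · refine (ae_restrict_iff' measurableSet_Ioi).2
                      (Filter.Eventually.of_forall ?_)
                    intro x hx
                    have hx0 : (0:ℝ) < x := hx
                    have h8 := (Real.rpow_pos_of_pos hx0 (-1 - c₁)).le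
                    positivity
                  · exact Set.Ioc_subset_Ioi_self.eventuallyLE
              _ ≤ 1 / (b₁ * c₁) := hGle
    have hftcT := aux_ftc b₁ c₁ (Real.log K / (2 * a)) hb hc hT
    have hbnd2 : (∫ x in Set.Ioi (Real.log K / (2 * a)),
        (1 - Real.exp (-(a * x))) ^ K *
          (Real.exp (-(b₁ * x ^ (-c₁))) * x ^ (-1 - c₁))) ≤
        b₁ * (Real.log K / (2 * a)) ^ (-c₁) * (1 / (b₁ * c₁)) := by
      have h2 := hftcT.2
      rw [integral_const_mul] at h2
      have h3 : (∫ x in Set.Ioi (Real.log K / (2 * a)),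
          Real.exp (-(b₁ * x ^ (-c₁))) * x ^ (-1 - c₁)) =
          (1 - Real.exp (-(b₁ * (Real.log K / (2 * a)) ^ (-c₁)))) / (b₁ * c₁) := by
        rw [eq_div_iff hbc.ne', mul_comm]
        exact h2
      calc (∫ x in Set.Ioi (Real.log K / (2 * a)),
            (1 - Real.exp (-(a * x))) ^ K *
              (Real.exp (-(b₁ * x ^ (-c₁))) * x ^ (-1 - c₁)))
          ≤ ∫ x in Set.Ioi (Real.log K / (2 * a)),
              Real.exp (-(b₁ * x ^ (-c₁))) * x ^ (-1 - c₁) := by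
            refine setIntegral_mono_on hIoiInt hGIoi measurableSet_Ioi ?_
            intro x hx
            exact hhleG K x (Set.Ioi_subset_Ioi hT.le hx)
        _ = (1 - Real.exp (-(b₁ * (Real.log K / (2 * a)) ^ (-c₁)))) / (b₁ * c₁) := h3
        _ ≤ b₁ * (Real.log K / (2 * a)) ^ (-c₁) * (1 / (b₁ * c₁)) := by
            rw [mul_one_div]
            gcongr
            linarith [Real.add_one_le_exp (-(b₁ * (Real.log K / (2 * a)) ^ (-c₁)))]
    have hPle : P K ≤ (1 - Real.exp (-(a * (Real.log K / (2 * a))))) ^ K +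
        b₁ * (Real.log K / (2 * a)) ^ (-c₁) := by
      rw [hPeq K, hsplit]
      calc b₁ * c₁ * ((∫ x in Set.Ioc (0:ℝ) (Real.log K / (2 * a)),
            (1 - Real.exp (-(a * x))) ^ K *
              (Real.exp (-(b₁ * x ^ (-c₁))) * x ^ (-1 - c₁))) +
          ∫ x in Set.Ioi (Real.log K / (2 * a)),
            (1 - Real.exp (-(a * x))) ^ K *
              (Real.exp (-(b₁ * x ^ (-c₁))) * x ^ (-1 - c₁)))
          ≤ b₁ * c₁ * ((1 - Real.exp (-(a * (Real.log K / (2 * a))))) ^ K * (1 / (b₁ * c₁)) +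
              b₁ * (Real.log K / (2 * a)) ^ (-c₁) * (1 / (b₁ * c₁))) :=
            mul_le_mul_of_nonneg_left (add_le_add hbnd1 hbnd2) hbc.le
        _ = (1 - Real.exp (-(a * (Real.log K / (2 * a))))) ^ K +
              b₁ * (Real.log K / (2 * a)) ^ (-c₁) := by
            field_simp
    have hTT : (Real.log K) ^ c₁ * (Real.log K / (2 * a)) ^ (-c₁) = (2 * a) ^ c₁ := by
      rw [Real.div_rpow hlogpos.le h2a.le, Real.rpow_neg h2a.le, Real.rpow_neg hlogpos.le]
      have h1 : (0:ℝ) < Real.log K ^ c₁ := Real.rpow_pos_of_pos hlogpos _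
      have h2 : (0:ℝ) < (2 * a) ^ c₁ := Real.rpow_pos_of_pos h2a _
      field_simp
    have hfirst : (Real.log K) ^ c₁ *
        (1 - Real.exp (-(a * (Real.log K / (2 * a))))) ^ K ≤ 1 := by
      have he : a * (Real.log K / (2 * a)) = Real.log K / 2 := by
        field_simp
      have hexp : Real.exp (-(Real.log K / 2)) = (K:ℝ) ^ (-(1/2) : ℝ) := by
        rw [show -(Real.log (K:ℝ) / 2) = Real.log (K:ℝ) * (-(1/2) : ℝ) by ring,
          Real.exp_mul, Real.exp_log hK0]
      have hKir : (K:ℝ) ^ (-(1/2) : ℝ) ≤ 1 :=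
        Real.rpow_le_one_of_one_le_of_nonpos (by linarith) (by norm_num)
      have hb0 : (0:ℝ) ≤ 1 - (K:ℝ) ^ (-(1/2) : ℝ) := by linarith
      have h1u : 1 - (K:ℝ) ^ (-(1/2) : ℝ) ≤ Real.exp (-((K:ℝ) ^ (-(1/2) : ℝ))) := by
        linarith [Real.add_one_le_exp (-((K:ℝ) ^ (-(1/2) : ℝ)))]
      have hKK : (K:ℝ) * (K:ℝ) ^ (-(1/2) : ℝ) = (K:ℝ) ^ ((1:ℝ)/2) := by
        nth_rewrite 1 [← Real.rpow_one (K:ℝ)]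
        rw [← Real.rpow_add hK0]
        norm_num
      have hpw : (1 - (K:ℝ) ^ (-(1/2) : ℝ)) ^ K ≤ Real.exp (-((K:ℝ) ^ ((1:ℝ)/2))) := by
        calc (1 - (K:ℝ) ^ (-(1/2) : ℝ)) ^ K
            ≤ (Real.exp (-((K:ℝ) ^ (-(1/2) : ℝ)))) ^ K := pow_le_pow_left₀ hb0 h1u K
          _ = Real.exp (-((K:ℝ) ^ (-(1/2) : ℝ)) * (K:ℕ)) := by
              rw [← Real.rpow_natCast (Real.exp _) K, ← Real.exp_mul]
          _ = Real.exp (-((K:ℝ) ^ ((1:ℝ)/2))) := by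
              congr 1
              rw [show -((K:ℝ) ^ (-(1/2) : ℝ)) * (K:ℕ) =
                -((K:ℝ) * (K:ℝ) ^ (-(1/2) : ℝ)) by push_cast; ring, hKK]
      have hlogleK : Real.log K ≤ (K:ℝ) :=
        (Real.log_le_sub_one_of_pos hK0).trans (by linarith)
      calc (Real.log K) ^ c₁ * (1 - Real.exp (-(a * (Real.log K / (2 * a))))) ^ K
          = (Real.log K) ^ c₁ * (1 - (K:ℝ) ^ (-(1/2) : ℝ)) ^ K := by
            rw [he, hexp]
        _ ≤ (K:ℝ) ^ c₁ * Real.exp (-((K:ℝ) ^ ((1:ℝ)/2))) := by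
            refine mul_le_mul (Real.rpow_le_rpow hlogpos.le hlogleK hc.le) hpw
              (pow_nonneg hb0 K) (Real.rpow_nonneg hK0.le _)
        _ ≤ 1 := hKs
    have hlc : (Real.log K) ^ ((2:ℝ) / α) = (Real.log K) ^ c₁ := by rw [hc₁]
    calc (Real.log K) ^ (2 / α) * P K = (Real.log K) ^ c₁ * P K := by rw [hlc]
      _ ≤ (Real.log K) ^ c₁ * ((1 - Real.exp (-(a * (Real.log K / (2 * a))))) ^ K +
            b₁ * (Real.log K / (2 * a)) ^ (-c₁)) :=
          mul_le_mul_of_nonneg_left hPle (Real.rpow_nonneg hlogpos.le _)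
      _ = (Real.log K) ^ c₁ * (1 - Real.exp (-(a * (Real.log K / (2 * a))))) ^ K +
            b₁ * ((Real.log K) ^ c₁ * (Real.log K / (2 * a)) ^ (-c₁)) := by ring
      _ ≤ 1 + b₁ * (2 * a) ^ c₁ := by
          rw [hTT]
          exact add_le_add hfirst le_rfl
  -- limit of the lower-bounding sequence
  have hs0 : Tendsto (fun K : ℕ => C * Real.log K ^ (-c₁)) atTop (𝓝 0) := by
    have h1 : Tendsto (fun K : ℕ => Real.log K) atTop atTop :=
      Real.tendsto_log_atTop.comp tendsto_natCast_atTop_atTop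
    have h2 := (tendsto_rpow_neg_atTop hc).comp h1
    have h3 := h2.const_mul C
    simpa [Function.comp] using h3
  have hsne : ∀ᶠ K : ℕ in atTop, C * Real.log K ^ (-c₁) ∈ {x : ℝ | x ≠ 0} := by
    filter_upwards [eventually_ge_atTop 3] with K hK
    have hK3 : (3:ℝ) ≤ (K:ℝ) := by exact_mod_cast hK
    have hlogpos : 0 < Real.log K := Real.log_pos (by linarith)
    exact (mul_pos hCpos (Real.rpow_pos_of_pos hlogpos _)).ne'
  have hφ : Tendsto (fun u : ℝ => (1 - Real.exp (-u)) / u) (𝓝[≠] (0:ℝ)) (𝓝 1) := by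
    have hd1 : HasDerivAt (fun u : ℝ => 1 - Real.exp (-u)) 1 0 := by
      have h1 : HasDerivAt (fun u : ℝ => -u) (-1) 0 := (hasDerivAt_id (0:ℝ)).neg
      have h2 := h1.exp
      have h3 := h2.const_sub 1
      rw [show (-(Real.exp (-0) * -1) : ℝ) = 1 by simp] at h3
      exact h3
    have h4 := hasDerivAt_iff_tendsto_slope.mp hd1
    refine Tendsto.congr' ?_ h4
    filter_upwards [self_mem_nhdsWithin] with u hu
    simp [slope_def_field]
  have hφs : Tendsto (fun K : ℕ =>
      (1 - Real.exp (-(C * Real.log K ^ (-c₁)))) / (C * Real.log K ^ (-c₁)))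
      atTop (𝓝 1) :=
    hφ.comp (tendsto_nhdsWithin_iff.mpr ⟨hs0, hsne⟩)
  have hpow : Tendsto (fun K : ℕ => (1 - 1 / (K:ℝ)) ^ K) atTop (𝓝 (Real.exp (-1))) := by
    have h1 := Real.tendsto_one_add_div_pow_exp (-1)
    refine h1.congr fun K => ?_
    rw [show (1 + -1 / (K:ℝ)) = 1 - 1 / (K:ℝ) by ring]
  have hbase := hpow.mul (hφs.const_mul C)
  have hLeq : (fun K : ℕ => (1 - 1 / (K:ℝ)) ^ K *
      (C * ((1 - Real.exp (-(C * Real.log K ^ (-c₁)))) / (C * Real.log K ^ (-c₁)))))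
      =ᶠ[atTop] fun K : ℕ => (1 - 1 / (K:ℝ)) ^ K * ((Real.log K) ^ (2 / α) *
        (1 - Real.exp (-(b₁ * (Real.log K / a) ^ (-c₁))))) := by
    filter_upwards [eventually_ge_atTop 3] with K hK
    have hK3 : (3:ℝ) ≤ (K:ℝ) := by exact_mod_cast hK
    have hlogpos : 0 < Real.log K := Real.log_pos (by linarith)
    have hrp : 0 < Real.log K ^ (-c₁) := Real.rpow_pos_of_pos hlogpos _
    have e1 : b₁ * (Real.log K / a) ^ (-c₁) = C * Real.log K ^ (-c₁) := by
      rw [Real.div_rpow hlogpos.le hapos.le, Real.rpow_neg hapos.le, hCdef]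
      field_simp
    have e3 : (Real.log K) ^ (2 / α) = C / (C * Real.log K ^ (-c₁)) := by
      rw [show C / (C * Real.log K ^ (-c₁)) = (Real.log K ^ (-c₁))⁻¹ by
        field_simp]
      rw [← Real.rpow_neg hlogpos.le, neg_neg, hc₁]
    congr 1
    rw [e1, e3]
    field_simp
  have hL : Tendsto (fun K : ℕ => (1 - 1 / (K:ℝ)) ^ K * ((Real.log K) ^ (2 / α) *
      (1 - Real.exp (-(b₁ * (Real.log K / a) ^ (-c₁)))))) atTop
      (𝓝 (Real.exp (-1) * (C * 1))) := Tendsto.congr' hLeq hbase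
  -- conclude
  have hgoalval : Real.pi * ρ * d ^ 2 * β ^ (2 / α) * Real.Gamma (1 + 2 / α) / Real.exp 1
      = Real.exp (-1) * (C * 1) := by
    rw [hval, Real.exp_neg]
    ring
  rw [hgoalval, ← hL.liminf_eq]
  refine Filter.liminf_le_liminf ?_ ?_ ?_
  · filter_upwards [eventually_ge_atTop 3] with K hK using hkey K hK
  · exact hL.isBoundedUnder_ge
  · exact Filter.isCoboundedUnder_ge_of_eventually_le atTop hcob
end

section
/- Let K be a positive integer, μ > 0 and λ > 0. Let X₁ be the maximum of K independent Exp(μ) random variables and let X₂ be an Exp(1/λ) random variable (mean λ) independent of X₁. Then for every x ≥ 0, the probability that X₁/(X₂ + 1) ≤ x equals ∑_{k=0}^{K} C(K,k) (−1)^k e^{−kμx} / (1 + kμλx), where C(K,k) is the binomial coefficient. -/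
open MeasureTheory ProbabilityTheory Real
open Set

lemma aux_expMeasure_eq (r : ℝ) : expMeasure r = volume.withDensity (exponentialPDF r) := rfl

lemma aux_expMeasure_Iic {r c : ℝ} (hr : 0 < r) (hc : 0 ≤ c) :
    expMeasure r (Iic c) = ENNReal.ofReal (1 - exp (-(r*c))) := by
  rw [aux_expMeasure_eq, withDensity_apply _ measurableSet_Iic,
    setLIntegral_congr (by rfl : (Iic c : Set ℝ) =ᵐ[volume] Iic c)]
  rw [lintegral_exponentialPDF_eq_antiDeriv hr c, if_pos hc]

lemma aux_expMeasure_Iio_zero (r : ℝ) : expMeasure r (Iio 0) = 0 := by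
  rw [aux_expMeasure_eq, withDensity_apply _ measurableSet_Iio]
  exact lintegral_exponentialPDF_of_nonpos le_rfl
lemma aux_exp_moment {r a : ℝ} (hr : 0 < r) (ha : 0 ≤ a) :
    ∫ t, exp (-(a*t)) ∂(expMeasure r) = r / (r + a) := by
  have hra : 0 < r + a := by linarith
  rw [integral_eq_lintegral_of_nonneg_ae (ae_of_all _ fun t => (exp_pos _).le)
    (Continuous.aestronglyMeasurable (by continuity))]
  have hptw : ∀ t : ℝ, exponentialPDF r t * ENNReal.ofReal (exp (-(a*t)))
      = ENNReal.ofReal (r/(r+a)) * exponentialPDF (r+a) t := by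
    intro t
    rcases le_or_gt 0 t with h|h
    · rw [exponentialPDF_of_nonneg h, exponentialPDF_of_nonneg h,
        ← ENNReal.ofReal_mul (by positivity), ← ENNReal.ofReal_mul (by positivity)]
      congr 1
      rw [mul_assoc, ← Real.exp_add, show -(r*t) + -(a*t) = -((r+a)*t) by ring]
      field_simp
    · rw [exponentialPDF_of_neg h, exponentialPDF_of_neg h, zero_mul, mul_zero]
  have hlint : ∫⁻ t, ENNReal.ofReal (exp (-(a*t))) ∂(expMeasure r)
      = ENNReal.ofReal (r/(r+a)) := by
    rw [aux_expMeasure_eq, lintegral_withDensity_eq_lintegral_mul _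
      (show Measurable (exponentialPDF r) from (measurable_exponentialPDFReal r).ennreal_ofReal)
      (((by continuity : Continuous fun t : ℝ => exp (-(a*t))).measurable).ennreal_ofReal)]
    calc ∫⁻ t, (exponentialPDF r * fun t => ENNReal.ofReal (exp (-(a*t)))) t
        = ∫⁻ t, ENNReal.ofReal (r/(r+a)) * exponentialPDF (r+a) t := lintegral_congr hptw
      _ = ENNReal.ofReal (r/(r+a)) * ∫⁻ t, exponentialPDF (r+a) t :=
          lintegral_const_mul _ ((measurable_exponentialPDFReal (r+a)).ennreal_ofReal)
      _ = ENNReal.ofReal (r/(r+a)) := by rw [lintegral_exponentialPDF_eq_one hra, mul_one]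
  rw [hlint, ENNReal.toReal_ofReal (by positivity)]

set_option maxHeartbeats 1000000 in
/-- If `X₁` is the maximum of `K` independent `Exp(μ)` random variables
and `X₂ ~ Exp(1/lam)` is independent of them, then for `x ≥ 0`,
`P(X₁/(X₂+1) ≤ x) = ∑ₖ C(K,k) (-1)^k e^{-kμx} / (1 + kμ·lam·x)`. -/
theorem fd_snr_cdf {Ω : Type*} [MeasurableSpace Ω] (P : Measure Ω)
    [IsProbabilityMeasure P]
    (K : ℕ) (hK : 0 < K) (μ lam : ℝ) (hμ : 0 < μ) (hlam : 0 < lam)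
    (Y : Fin K → Ω → ℝ) (X₂ : Ω → ℝ)
    (hYmeas : ∀ i, Measurable (Y i)) (hX₂meas : Measurable X₂)
    (hindep : iIndepFun (Fin.cons X₂ Y : Fin (K + 1) → Ω → ℝ) P)
    (hYdist : ∀ i, Measure.map (Y i) P = expMeasure μ)
    (hX₂dist : Measure.map X₂ P = expMeasure (1 / lam))
    (x : ℝ) (hx : 0 ≤ x) :
    (P {ω | (⨆ i, Y i ω) / (X₂ ω + 1) ≤ x}).toReal =
      ∑ k ∈ Finset.range (K + 1),
        (K.choose k : ℝ) * (-1 : ℝ) ^ k * exp (-(k * μ * x)) / (1 + k * μ * lam * x) := by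
  classical
  haveI : Nonempty (Fin K) := Fin.pos_iff_nonempty.mp hK
  set X₁ : Ω → ℝ := fun ω => ⨆ i, Y i ω with hX₁def
  have hX₁meas : Measurable X₁ := Measurable.iSup hYmeas
  have hfmeas : ∀ i, Measurable ((Fin.cons X₂ Y : Fin (K+1) → Ω → ℝ) i) := by
    intro i
    refine Fin.cases (motive := fun i => Measurable ((Fin.cons X₂ Y : Fin (K+1) → Ω → ℝ) i)) ?_ ?_ i
    · show Measurable ((Fin.cons X₂ Y : Fin (K+1) → Ω → ℝ) 0)
      rw [Fin.cons_zero]; exact hX₂meas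
    · intro j
      show Measurable ((Fin.cons X₂ Y : Fin (K+1) → Ω → ℝ) j.succ)
      rw [Fin.cons_succ]; exact hYmeas j
  set ν₁ : Measure ℝ := P.map X₁ with hν₁def
  set ν₂ : Measure ℝ := expMeasure (1/lam) with hν₂def
  haveI : IsProbabilityMeasure ν₂ := isProbabilityMeasure_expMeasure (by positivity)
  haveI : IsProbabilityMeasure ν₁ := Measure.isProbabilityMeasure_map hX₁meas.aemeasurable
  -- CDF of the max
  have hν₁Iic : ∀ c : ℝ, 0 ≤ c → ν₁ (Iic c) = ENNReal.ofReal ((1 - exp (-(μ*c)))^K) := by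
    intro c hc
    have hpre : X₁ ⁻¹' Iic c = ⋂ j : Fin K, Y j ⁻¹' Iic c := by
      ext ω
      simp only [mem_preimage, mem_Iic, mem_iInter, hX₁def]
      exact ciSup_le_iff (Set.Finite.bddAbove (Set.finite_range fun i => Y i ω))
    set S : Finset (Fin (K+1)) := Finset.univ.map ⟨Fin.succ, Fin.succ_injective K⟩ with hSdef
    have hinter := hindep.measure_inter_preimage_eq_mul S
      (sets := fun _ => Iic c) (fun i _ => measurableSet_Iic)
    have hset : (⋂ i ∈ S, ((Fin.cons X₂ Y : Fin (K+1) → Ω → ℝ) i) ⁻¹' Iic c) = ⋂ j : Fin K, Y j ⁻¹' Iic c := by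
      ext ω
      simp only [mem_iInter, hSdef, Finset.mem_map, Finset.mem_univ, true_and,
        Function.Embedding.coeFn_mk, mem_preimage, mem_Iic]
      constructor
      · intro h j
        have := h (Fin.succ j) ⟨j, rfl⟩
        rwa [Fin.cons_succ] at this
      · rintro h i ⟨j, rfl⟩
        rw [Fin.cons_succ]
        exact h j
    rw [hset] at hinter
    rw [hν₁def, Measure.map_apply hX₁meas measurableSet_Iic, hpre, hinter, hSdef,
      Finset.prod_map]
    simp only [Function.Embedding.coeFn_mk, Fin.cons_succ]
    have : ∀ j : Fin K, P (Y j ⁻¹' Iic c) = ENNReal.ofReal (1 - exp (-(μ*c))) := by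
      intro j
      rw [← Measure.map_apply (hYmeas j) measurableSet_Iic, hYdist j, aux_expMeasure_Iic hμ hc]
    rw [Finset.prod_congr rfl (fun j _ => this j), Finset.prod_const, Finset.card_univ,
      Fintype.card_fin, ENNReal.ofReal_pow (by
        have : exp (-(μ*c)) ≤ 1 := exp_le_one_iff.mpr (neg_nonpos.mpr (by positivity))
        linarith)]
  -- independence of X₂ and X₁
  have hIndep : IndepFun X₂ X₁ P := by
    set S0 : Finset (Fin (K+1)) := {0} with hS0
    set T0 : Finset (Fin (K+1)) := {0}ᶜ with hT0
    have h0S : (0 : Fin (K+1)) ∈ S0 := Finset.mem_singleton_self 0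
    have hmemT : ∀ j : Fin K, j.succ ∈ T0 :=
      fun j => Finset.mem_compl.mpr (by
        simp only [hS0, Finset.mem_singleton]
        exact Fin.succ_ne_zero j)
    have hfin := hindep.indepFun_finset S0 T0 disjoint_compl_right hfmeas
    have hψ : Measurable (fun v : T0 → ℝ => ⨆ j : Fin K, v ⟨j.succ, hmemT j⟩) :=
      Measurable.iSup (fun j => measurable_pi_apply (⟨j.succ, hmemT j⟩ : T0))
    have := hfin.comp (φ := fun v : S0 → ℝ => v ⟨0, h0S⟩)
      (ψ := fun v : T0 → ℝ => ⨆ j : Fin K, v ⟨j.succ, hmemT j⟩)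
      (show Measurable (fun v : S0 → ℝ => v ⟨0, h0S⟩) from measurable_pi_apply _) hψ
    have e1 : ((fun v : S0 → ℝ => v ⟨0, h0S⟩) ∘ fun a (i : S0) => (Fin.cons X₂ Y : Fin (K+1) → Ω → ℝ) i a) = X₂ :=
      funext fun a => by
        show (Fin.cons X₂ Y : Fin (K+1) → Ω → ℝ) 0 a = X₂ a
        rw [Fin.cons_zero]
    have e2 : ((fun v : T0 → ℝ => ⨆ j : Fin K, v ⟨j.succ, hmemT j⟩) ∘
        fun a (i : T0) => (Fin.cons X₂ Y : Fin (K+1) → Ω → ℝ) i a) = X₁ :=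
      funext fun a => by
        show (⨆ j : Fin K, (Fin.cons X₂ Y : Fin (K+1) → Ω → ℝ) j.succ a) = X₁ a
        rw [hX₁def]
        exact iSup_congr fun j => by rw [Fin.cons_succ]
    rwa [e1, e2] at this
  have hmap : P.map (fun ω => (X₂ ω, X₁ ω)) = ν₂.prod ν₁ := by
    rw [← hX₂dist, hν₁def]
    exact (indepFun_iff_map_prod_eq_prod_map_map hX₂meas.aemeasurable
      hX₁meas.aemeasurable).mp hIndep
  set Sev : Set (ℝ × ℝ) := {p : ℝ × ℝ | p.2 / (p.1 + 1) ≤ x} with hSev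
  have hSmeas : MeasurableSet Sev :=
    measurableSet_le (measurable_snd.div (measurable_fst.add_const 1)) measurable_const
  have hae : ∀ᵐ t ∂ν₂, 0 ≤ t := by
    rw [ae_iff]
    have h0 : {t : ℝ | ¬ 0 ≤ t} = Iio 0 := by ext t; simp only [mem_setOf_eq, mem_Iio, not_le]
    rw [h0, hν₂def]
    exact aux_expMeasure_Iio_zero _
  set g : ℝ → ℝ := fun t => (1 - exp (-(μ*(x*(t+1)))))^K with hg
  have hstep1 : P {ω | (⨆ i, Y i ω) / (X₂ ω + 1) ≤ x} = ∫⁻ t, ENNReal.ofReal (g t) ∂ν₂ := by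
    have h1 : {ω | (⨆ i, Y i ω) / (X₂ ω + 1) ≤ x} = (fun ω => (X₂ ω, X₁ ω)) ⁻¹' Sev := rfl
    rw [h1, ← Measure.map_apply (hX₂meas.prodMk hX₁meas) hSmeas, hmap,
      Measure.prod_apply hSmeas]
    refine lintegral_congr_ae (hae.mono fun t ht => ?_)
    show ν₁ (Prod.mk t ⁻¹' Sev) = ENNReal.ofReal (g t)
    have ht1 : (0:ℝ) < t + 1 := by linarith
    have h2 : (Prod.mk t ⁻¹' Sev) = Iic (x*(t+1)) := by
      ext y
      simp only [hSev, mem_preimage, mem_setOf_eq, mem_Iic]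
      exact div_le_iff₀ ht1
    rw [h2, hν₁Iic _ (by positivity)]
  rw [hstep1, ← integral_eq_lintegral_of_nonneg_ae
    (hae.mono fun t ht => by
      have h1 : exp (-(μ*(x*(t+1)))) ≤ 1 := exp_le_one_iff.mpr (neg_nonpos.mpr (by positivity))
      exact pow_nonneg (by linarith) K)
    (Continuous.aestronglyMeasurable (by continuity))]
  -- pointwise binomial expansion
  have key : ∀ t : ℝ, g t = ∑ k ∈ Finset.range (K+1),
      (K.choose k : ℝ) * (-1:ℝ)^k *
        (exp (-((k:ℝ)*μ*x)) * exp (-(((k:ℝ)*μ*x)*t))) := by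
    intro t
    have h1 : ∀ k : ℕ, exp (-((k:ℝ)*μ*x)) * exp (-(((k:ℝ)*μ*x)*t))
        = exp (-(μ*(x*(t+1))))^k := by
      intro k
      rw [← Real.exp_add, ← Real.exp_nat_mul]
      congr 1
      ring
    simp only [hg]
    rw [show (1 : ℝ) - exp (-(μ*(x*(t+1)))) = -exp (-(μ*(x*(t+1)))) + 1 by ring, add_pow]
    refine Finset.sum_congr rfl fun k hk => ?_
    rw [neg_pow, h1 k]
    ring
  simp_rw [key]
  have hint : ∀ k ∈ Finset.range (K+1), Integrable (fun t =>
      (K.choose k : ℝ) * (-1:ℝ)^k *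
        (exp (-((k:ℝ)*μ*x)) * exp (-(((k:ℝ)*μ*x)*t)))) ν₂ := by
    intro k _
    have ha : (0:ℝ) ≤ (k:ℝ)*μ*x := by positivity
    have hbase : Integrable (fun t => exp (-(((k:ℝ)*μ*x)*t))) ν₂ := by
      refine Integrable.mono' (integrable_const 1)
        (Continuous.aestronglyMeasurable (by continuity)) ?_
      filter_upwards [hae] with t ht
      rw [Real.norm_eq_abs, Real.abs_exp]
      exact exp_le_one_iff.mpr (neg_nonpos.mpr (by positivity))
    exact (hbase.const_mul _).const_mul _
  rw [integral_finset_sum _ hint]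
  refine Finset.sum_congr rfl fun k hk => ?_
  rw [integral_const_mul, integral_const_mul, hν₂def,
    aux_exp_moment (by positivity) (by positivity)]
  have hd1 : (1:ℝ)/lam + (k:ℝ)*μ*x ≠ 0 := by positivity
  have hd2 : (1:ℝ) + (k:ℝ)*μ*lam*x ≠ 0 := by positivity
  field_simp
  try exact Or.inl trivial
end

section
/- Define, for y > 0, α > 0 and δ > 0, Ψ(y; α, δ) = ∫₀^{2π} ∫₀^1 (y z^{α+1}) / (y z^α + (z² + δ² − 2zδ cos θ)^{α/2}) dz dθ. Then for all y > 0 and δ > 0 with δ ≠ 1, Ψ(y; 2, δ) = (π y/(y+1)³) · [ (y+1)(ψ(y,δ) − δ²) + δ²(y−1) ln( 2δ²y / ( δ²(y−1) + (y+1)(ψ(y,δ) + y + 1) ) ) ], where ψ(y, δ) = √(δ⁴ + 2δ²(y−1) + (y+1)²). -/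
open MeasureTheory Real

section Aux

lemma deriv_algebra (A B l s c : ℝ) (h1 : 0 < A - B)
    (hD : 0 < (1+l) + (1-l)*c)
    (hsc : s^2 + c^2 = 1) (hl2 : l^2 * (A-B) = A+B) (hl0 : 0 < l)
    (hpos : 0 < A - B*c) :
    (A - B*c)⁻¹ =
      (1 + 2 * (1 / (1 + ((l-1) * s / ((1+l) + (1-l)*c))^2) *
        (((l-1)*c*((1+l) + (1-l)*c) - (l-1)*s*((1-l) * -s)) / ((1+l) + (1-l)*c)^2)))
        / (l*(A-B)) := by
  have hE : ((1+l) + (1-l)*c)^2 + ((l-1)*s)^2 = (2+2*l^2) + 2*(1-l^2)*c := by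
    linear_combination (l-1)^2 * hsc
  have hEpos : (0:ℝ) < (2+2*l^2) + 2*(1-l^2)*c := by
    nlinarith [sq_nonneg ((l-1)*s), hD]
  have e1 : 1 + ((l-1) * s / ((1+l) + (1-l)*c))^2
      = ((2+2*l^2) + 2*(1-l^2)*c) / ((1+l) + (1-l)*c)^2 := by
    rw [← hE]; field_simp
  rw [e1]
  rw [one_div, inv_div]
  have e2 : ((1+l) + (1-l)*c)^2 / ((2+2*l^2) + 2*(1-l^2)*c) *
        (((l-1)*c*((1+l) + (1-l)*c) - (l-1)*s*((1-l) * -s)) / ((1+l) + (1-l)*c)^2)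
      = (((l-1)*c*((1+l) + (1-l)*c) - (l-1)*s*((1-l) * -s))) / ((2+2*l^2) + 2*(1-l^2)*c) := by
    field_simp
  rw [e2]
  have e3 : 1 + 2 * ((((l-1)*c*((1+l) + (1-l)*c) - (l-1)*s*((1-l) * -s))) / ((2+2*l^2) + 2*(1-l^2)*c))
      = 4*l / ((2+2*l^2) + 2*(1-l^2)*c) := by
    have hE2 : (1 + l^2 + c*(1-l^2)) ≠ 0 := by nlinarith
    field_simp
    linear_combination (-2*(l-1)^2) * hsc
  rw [e3, div_div, inv_eq_one_div, div_eq_div_iff hpos.ne' (by positivity)]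
  linear_combination l * (2 - 2*c) * hl2

lemma integral_inv_sub_cos (A B : ℝ) (h : |B| < A) :
    ∫ θ in (0:ℝ)..(2*Real.pi), (A - B * Real.cos θ)⁻¹
      = 2 * Real.pi / Real.sqrt (A^2 - B^2) := by
  have hB := abs_lt.1 h
  have h1 : 0 < A - B := by linarith [hB.2]
  have h2 : 0 < A + B := by linarith [hB.1]
  set l := Real.sqrt ((A+B)/(A-B)) with hl
  have hl0 : 0 < l := Real.sqrt_pos.2 (div_pos h2 h1)
  have hl2 : l^2 * (A - B) = A + B := by
    rw [hl, Real.sq_sqrt (div_pos h2 h1).le]; field_simp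
  have hC2 : Real.sqrt (A^2 - B^2) = l * (A - B) := by
    have : A^2 - B^2 = (l*(A-B))^2 := by nlinarith [hl2]
    rw [this, Real.sqrt_sq (by positivity)]
  have hD : ∀ θ : ℝ, 0 < (1+l) + (1-l)*Real.cos θ := by
    intro θ
    rcases le_or_gt 0 (Real.cos θ) with hc | hc
    · nlinarith [mul_nonneg hl0.le (sub_nonneg.2 (Real.cos_le_one θ))]
    · nlinarith [Real.neg_one_le_cos θ, mul_pos hl0 (by linarith : (0:ℝ) < 1 - Real.cos θ)]
  have hpos : ∀ θ : ℝ, 0 < A - B * Real.cos θ := by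
    intro θ
    have : B * Real.cos θ ≤ |B| := by
      calc B * Real.cos θ ≤ |B * Real.cos θ| := le_abs_self _
        _ = |B| * |Real.cos θ| := abs_mul _ _
        _ ≤ |B| * 1 := by
            exact mul_le_mul_of_nonneg_left (Real.abs_cos_le_one θ) (abs_nonneg B)
        _ = |B| := mul_one _
    linarith
  set C := l * (A - B) with hCdef
  have hC0 : 0 < C := by positivity
  have key : ∀ θ : ℝ, HasDerivAt
      (fun t => (t + 2 * Real.arctan ((l-1) * Real.sin t / ((1+l) + (1-l)*Real.cos t)))/C)
      ((A - B * Real.cos θ)⁻¹) θ := by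
    intro θ
    have hDθ := hD θ
    have hnum : HasDerivAt (fun t => (l-1) * Real.sin t) ((l-1) * Real.cos θ) θ :=
      (Real.hasDerivAt_sin θ).const_mul _
    have hden : HasDerivAt (fun t => (1+l) + (1-l)*Real.cos t) ((1-l) * -Real.sin θ) θ :=
      ((Real.hasDerivAt_cos θ).const_mul _).const_add _
    have hu := hnum.div hden hDθ.ne'
    have harc := (Real.hasDerivAt_arctan
      ((l-1) * Real.sin θ / ((1+l) + (1-l)*Real.cos θ))).comp θ hu
    have hG := ((hasDerivAt_id θ).add (harc.const_mul 2)).div_const C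
    refine hG.congr_deriv ?_
    set s := Real.sin θ
    set cθ := Real.cos θ
    have hsc : s^2 + cθ^2 = 1 := Real.sin_sq_add_cos_sq θ
    have hAC : A - B * cθ ≠ 0 := (hpos θ).ne'
    exact (deriv_algebra A B l s cθ h1 hDθ hsc hl2 hl0 (hpos θ)).symm
  have hcont : Continuous fun θ : ℝ => (A - B * Real.cos θ)⁻¹ := by
    exact Continuous.inv₀ (by continuity) (fun θ => (hpos θ).ne')
  have hInt := intervalIntegral.integral_eq_sub_of_hasDerivAt
    (f := fun t => (t + 2 * Real.arctan ((l-1) * Real.sin t / ((1+l) + (1-l)*Real.cos t)))/C)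
    (fun θ _ => key θ) (hcont.intervalIntegrable 0 (2*Real.pi))
  rw [hInt]
  simp [Real.sin_two_pi, Real.arctan_zero, hC2]

lemma zderiv_algebra (a b z S sa : ℝ) (hsa : sa ≠ 0) (hsa2 : sa^2 = a) (hS : S ≠ 0)
    (hL : 2*sa*S + 2*a*z^2 + b ≠ 0) :
    z^3 / S =
      1/(2*S)*(4*a*z^3+2*b*z)/(2*a) - b/(4*a*sa) *
        ((2*sa*S+2*a*z^2+b)⁻¹ * (2*sa*(1/(2*S)*(4*a*z^3+2*b*z)) + 2*a*(2*z))) := by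
  subst hsa2
  have hL' : 2*sa*(S+z^2*sa)+b ≠ 0 := by convert hL using 1; ring
  field_simp
  ring

lemma integral_cube_div_sqrt (a b c : ℝ) (ha : 0 < a) (hd : b^2 < 4*a*c) :
    ∫ z in (0:ℝ)..1, z^3 / Real.sqrt (a*z^4 + b*z^2 + c) =
      (Real.sqrt (a+b+c) - Real.sqrt c)/(2*a)
      - b/(4*a*Real.sqrt a) *
        (Real.log (2*Real.sqrt a*Real.sqrt (a+b+c) + 2*a + b)
          - Real.log (2*Real.sqrt a*Real.sqrt c + b)) := by
  have hc : 0 < c := by nlinarith [sq_nonneg b]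
  have hQ : ∀ z : ℝ, 0 < a*z^4 + b*z^2 + c := by
    intro z; nlinarith [sq_nonneg (2*a*z^2 + b), sq_nonneg z, sq_nonneg (z^2)]
  have hsa : 0 < Real.sqrt a := Real.sqrt_pos.2 ha
  have hsa2 : (Real.sqrt a)^2 = a := Real.sq_sqrt ha.le
  have hS : ∀ z : ℝ, 0 < Real.sqrt (a*z^4 + b*z^2 + c) := fun z => Real.sqrt_pos.2 (hQ z)
  have hS2 : ∀ z : ℝ, (Real.sqrt (a*z^4 + b*z^2 + c))^2 = a*z^4 + b*z^2 + c :=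
    fun z => Real.sq_sqrt (hQ z).le
  have hL : ∀ z : ℝ, 0 < 2*Real.sqrt a*Real.sqrt (a*z^4 + b*z^2 + c) + 2*a*z^2 + b := by
    intro z
    nlinarith [hS z, hsa, hS2 z, hsa2, mul_pos hsa (hS z),
      sq_nonneg (2*Real.sqrt a*Real.sqrt (a*z^4 + b*z^2 + c) + (2*a*z^2 + b))]
  set H : ℝ → ℝ := fun z => Real.sqrt (a*z^4 + b*z^2 + c)/(2*a)
      - b/(4*a*Real.sqrt a) * Real.log (2*Real.sqrt a*Real.sqrt (a*z^4 + b*z^2 + c) + 2*a*z^2 + b)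
    with hH
  have key : ∀ z : ℝ, HasDerivAt H (z^3 / Real.sqrt (a*z^4 + b*z^2 + c)) z := by
    intro z
    have hP : HasDerivAt (fun z : ℝ => a*z^4 + b*z^2 + c) (4*a*z^3 + 2*b*z) z := by
      have := (((hasDerivAt_pow 4 z).const_mul a).add ((hasDerivAt_pow 2 z).const_mul b)).add_const c
      refine this.congr_deriv ?_
      push_cast; ring
    have hSd : HasDerivAt (fun z : ℝ => Real.sqrt (a*z^4 + b*z^2 + c))
        (1/(2*Real.sqrt (a*z^4 + b*z^2 + c)) * (4*a*z^3 + 2*b*z)) z :=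
      (Real.hasDerivAt_sqrt (hQ z).ne').comp z hP
    have hLd : HasDerivAt (fun z : ℝ => 2*Real.sqrt a*Real.sqrt (a*z^4 + b*z^2 + c) + 2*a*z^2 + b)
        (2*Real.sqrt a*(1/(2*Real.sqrt (a*z^4 + b*z^2 + c)) * (4*a*z^3 + 2*b*z)) + 2*a*(2*z)) z := by
      have h2 : HasDerivAt (fun z : ℝ => 2*a*z^2) (2*a*(2*z)) z := by
        have := (hasDerivAt_pow 2 z).const_mul (2*a)
        refine this.congr_deriv ?_
        push_cast; ring
      exact ((hSd.const_mul (2*Real.sqrt a)).add h2).add_const b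
    have hlog := (Real.hasDerivAt_log (hL z).ne').comp z hLd
    have hGd := (hSd.div_const (2*a)).sub ((hlog.const_mul (b/(4*a*Real.sqrt a))))
    refine hGd.congr_deriv ?_
    exact (zderiv_algebra a b z _ _ hsa.ne' hsa2 (hS z).ne' (hL z).ne').symm
  have hcont : Continuous fun z : ℝ => z^3 / Real.sqrt (a*z^4 + b*z^2 + c) := by
    apply Continuous.div (by continuity) (by continuity) (fun z => (hS z).ne')
  have hInt := intervalIntegral.integral_eq_sub_of_hasDerivAt
    (f := H) (fun z _ => key z) (hcont.intervalIntegrable 0 1)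
  rw [hInt, hH]
  have e0 : a*(0:ℝ)^4 + b*(0:ℝ)^2 + c = c := by ring
  have e1 : a*(1:ℝ)^4 + b*(1:ℝ)^2 + c = a+b+c := by ring
  simp only [e0, e1]
  ring_nf

end Aux

set_option maxHeartbeats 1000000 in
/-- Closed form for `Ψ(y; 2, δ)`, where
`Ψ(y; α, δ) = ∫₀^{2π} ∫₀^1 y z^{α+1} / (y z^α + (z² + δ² - 2zδ cos θ)^{α/2}) dz dθ`. -/
theorem Psi_closed_form_alpha_two
    (Ψ : ℝ → ℝ → ℝ → ℝ)
    (hΨ : ∀ y α δ : ℝ, Ψ y α δ =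
      ∫ θ in (0:ℝ)..(2 * Real.pi), ∫ z in (0:ℝ)..1,
        y * z ^ (α + 1) /
          (y * z ^ α + (z ^ 2 + δ ^ 2 - 2 * z * δ * Real.cos θ) ^ (α / 2)))
    (ψ : ℝ → ℝ → ℝ)
    (hψ : ∀ y δ : ℝ, ψ y δ = Real.sqrt (δ ^ 4 + 2 * δ ^ 2 * (y - 1) + (y + 1) ^ 2))
    (y δ : ℝ) (hy : 0 < y) (hδ : 0 < δ) (hδ1 : δ ≠ 1) :
    Ψ y 2 δ = Real.pi * y / (y + 1) ^ 3 *
      ((y + 1) * (ψ y δ - δ ^ 2) +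
        δ ^ 2 * (y - 1) *
          Real.log (2 * δ ^ 2 * y /
            (δ ^ 2 * (y - 1) + (y + 1) * (ψ y δ + y + 1)))) := by
  have hy1 : (0:ℝ) < y + 1 := by linarith
  -- simplify the rpow integrand
  have hsimp : ∀ θ z : ℝ, y * z ^ ((2:ℝ) + 1) /
      (y * z ^ (2:ℝ) + (z ^ 2 + δ ^ 2 - 2 * z * δ * Real.cos θ) ^ ((2:ℝ) / 2))
      = y * z ^ 3 / (y * z ^ 2 + (z ^ 2 + δ ^ 2 - 2 * z * δ * Real.cos θ)) := by
    intro θ z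
    rw [show ((2:ℝ)/2) = (1:ℝ) by norm_num, Real.rpow_one,
      show ((2:ℝ)+1) = ((3:ℕ):ℝ) by norm_num, Real.rpow_natCast,
      show (2:ℝ) = ((2:ℕ):ℝ) by norm_num, Real.rpow_natCast]
  have hden : ∀ θ z : ℝ, 0 < y * z ^ 2 + (z ^ 2 + δ ^ 2 - 2 * z * δ * Real.cos θ) := by
    intro θ z
    have h1 : z * Real.cos θ ≤ |z| := by
      calc z * Real.cos θ ≤ |z * Real.cos θ| := le_abs_self _
        _ = |z| * |Real.cos θ| := abs_mul _ _
        _ ≤ |z| * 1 := mul_le_mul_of_nonneg_left (Real.abs_cos_le_one θ) (abs_nonneg z)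
        _ = |z| := mul_one _
    rcases eq_or_ne z 0 with rfl | hz
    · have : (0:ℝ) < δ ^ 2 := by positivity
      nlinarith [this]
    · nlinarith [sq_nonneg (|z| - δ), sq_abs z,
        mul_pos hy (pow_pos (abs_pos.2 hz) 2),
        mul_le_mul_of_nonneg_left h1 (by positivity : (0:ℝ) ≤ 2 * δ)]
  rw [hΨ y 2 δ]
  simp only [hsimp]
  -- Fubini
  have h2pi : (0:ℝ) ≤ 2 * Real.pi := by positivity
  have hgc : Continuous (fun p : ℝ × ℝ =>
      y * p.2 ^ 3 / (y * p.2 ^ 2 + (p.2 ^ 2 + δ ^ 2 - 2 * p.2 * δ * Real.cos p.1))) := by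
    apply Continuous.div (by fun_prop) (by fun_prop)
    exact fun p => (hden p.1 p.2).ne'
  have hIntOn : IntegrableOn (fun p : ℝ × ℝ =>
      y * p.2 ^ 3 / (y * p.2 ^ 2 + (p.2 ^ 2 + δ ^ 2 - 2 * p.2 * δ * Real.cos p.1)))
      ((Set.Ioc 0 (2 * Real.pi)) ×ˢ (Set.Ioc (0:ℝ) 1)) volume := by
    exact (hgc.continuousOn.integrableOn_compact (isCompact_Icc.prod isCompact_Icc)).mono_set
      (Set.prod_mono Set.Ioc_subset_Icc_self Set.Ioc_subset_Icc_self)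
  have hswap : (∫ θ in (0:ℝ)..(2 * Real.pi), ∫ z in (0:ℝ)..1,
        y * z ^ 3 / (y * z ^ 2 + (z ^ 2 + δ ^ 2 - 2 * z * δ * Real.cos θ)))
      = ∫ z in (0:ℝ)..1, ∫ θ in (0:ℝ)..(2 * Real.pi),
        y * z ^ 3 / (y * z ^ 2 + (z ^ 2 + δ ^ 2 - 2 * z * δ * Real.cos θ)) := by
    rw [intervalIntegral.integral_of_le h2pi, intervalIntegral.integral_of_le (zero_le_one)]
    simp only [intervalIntegral.integral_of_le h2pi,
      intervalIntegral.integral_of_le (zero_le_one (α := ℝ))]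
    apply MeasureTheory.integral_integral_swap
    rw [Measure.prod_restrict, ← Measure.volume_eq_prod]
    exact hIntOn
  rw [hswap]
  -- compute the inner θ-integral
  have hz : ∀ z ∈ Set.uIcc (0:ℝ) 1,
      (∫ θ in (0:ℝ)..(2 * Real.pi),
        y * z ^ 3 / (y * z ^ 2 + (z ^ 2 + δ ^ 2 - 2 * z * δ * Real.cos θ)))
      = (2 * Real.pi * y) *
          (z ^ 3 / Real.sqrt ((y+1)^2 * z ^ 4 + (2*δ^2*(y-1)) * z ^ 2 + δ^4)) := by
    intro z hzmem
    rw [Set.uIcc_of_le zero_le_one] at hzmem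
    have hz0 : 0 ≤ z := hzmem.1
    have hAB : |2 * z * δ| < y * z ^ 2 + z ^ 2 + δ ^ 2 := by
      rw [abs_lt]
      constructor
      · nlinarith [sq_nonneg (z + δ), mul_nonneg hy.le (sq_nonneg z)]
      · rcases eq_or_ne z 0 with rfl | hzne
        · nlinarith [sq_nonneg δ, mul_pos hδ hδ]
        · nlinarith [sq_nonneg (z - δ), mul_pos hy (pow_pos (lt_of_le_of_ne hz0 (Ne.symm hzne)) 2)]
    have e : Set.EqOn (fun θ : ℝ => y * z ^ 3 / (y * z ^ 2 + (z ^ 2 + δ ^ 2 - 2 * z * δ * Real.cos θ)))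
        (fun θ : ℝ => (y * z ^ 3) * ((y * z ^ 2 + z ^ 2 + δ ^ 2) - (2 * z * δ) * Real.cos θ)⁻¹)
        (Set.uIcc 0 (2 * Real.pi)) := by
      intro θ _
      dsimp only
      rw [div_eq_mul_inv]
      congr 1
      ring
    rw [intervalIntegral.integral_congr e, intervalIntegral.integral_const_mul,
      integral_inv_sub_cos _ _ hAB]
    rw [show (y * z ^ 2 + z ^ 2 + δ ^ 2) ^ 2 - (2 * z * δ) ^ 2
        = (y+1)^2 * z ^ 4 + (2*δ^2*(y-1)) * z ^ 2 + δ^4 by ring]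
    field_simp
  rw [intervalIntegral.integral_congr hz, intervalIntegral.integral_const_mul]
  have ha : (0:ℝ) < (y+1)^2 := by positivity
  have hdisc : (2*δ^2*(y-1))^2 < 4 * ((y+1)^2) * (δ^4) := by
    nlinarith [mul_pos (pow_pos hδ 4) hy]
  rw [integral_cube_div_sqrt _ _ _ ha hdisc]
  -- final algebra
  have hsa : Real.sqrt ((y+1)^2) = y + 1 := Real.sqrt_sq hy1.le
  have hsc : Real.sqrt (δ^4) = δ^2 := by
    rw [show (δ:ℝ)^4 = (δ^2)^2 by ring, Real.sqrt_sq (by positivity)]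
  have habc : Real.sqrt ((y+1)^2 + 2*δ^2*(y-1) + δ^4) = ψ y δ := by
    rw [hψ]; congr 1; ring
  have hψnn : 0 ≤ δ ^ 4 + 2 * δ ^ 2 * (y - 1) + (y + 1) ^ 2 := by
    nlinarith [sq_nonneg (δ^2 + y - 1)]
  have hψpos : 0 < ψ y δ := by
    rw [hψ]; apply Real.sqrt_pos.2; nlinarith [sq_nonneg (δ^2 + y - 1)]
  have hψ2 : (ψ y δ)^2 = δ ^ 4 + 2 * δ ^ 2 * (y - 1) + (y + 1) ^ 2 := by
    rw [hψ]; exact Real.sq_sqrt hψnn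
  have hXpos : 0 < δ ^ 2 * (y - 1) + (y + 1) * (ψ y δ + y + 1) := by
    have key : ((y+1) * ψ y δ)^2 = (δ^2*(y-1) + (y+1)^2)^2 + 4*δ^4*y := by
      linear_combination (y+1)^2 * hψ2
    nlinarith [key, mul_pos hy1 hψpos, mul_pos (pow_pos hδ 4) hy]
  have h2δy : (0:ℝ) < 2 * δ^2 * y := by positivity
  rw [hsa, hsc, habc]
  have hlog : Real.log (2*(y+1)*ψ y δ + 2*(y+1)^2 + 2*δ^2*(y-1))
      - Real.log (2*(y+1)*δ^2 + 2*δ^2*(y-1))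
      = - Real.log (2 * δ ^ 2 * y / (δ ^ 2 * (y - 1) + (y + 1) * (ψ y δ + y + 1))) := by
    rw [show 2*(y+1)*ψ y δ + 2*(y+1)^2 + 2*δ^2*(y-1)
        = 2 * (δ ^ 2 * (y - 1) + (y + 1) * (ψ y δ + y + 1)) by ring,
      show 2*(y+1)*δ^2 + 2*δ^2*(y-1) = 2 * (2 * δ^2 * y) by ring,
      Real.log_mul two_ne_zero hXpos.ne', Real.log_mul two_ne_zero h2δy.ne',
      Real.log_div h2δy.ne' hXpos.ne']
    ring
  rw [hlog]
  field_simp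
  ring
end
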